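/- arXiv:1602.06629 — 3 statements merged into one kernel-verified Lean document; each statement's English description precedes it below -/
import Mathlib

section
/- Fix an integer b ≥ 2 and λ_c > 0, and let (X_N)_{N≥1} be a sequence of nonnegative reals such that |X_N − κ_b²/(λ_c N)| = O(1/N²). Then M^{⌊λ_c N⌋}(X_N) = (κ_b²/η_b) · 1/log(N/log N) + O(1/(log N)²); that is, there exist C > 0 and N_0 such that |M^{⌊λ_c N⌋}(X_N) − (κ_b²/η_b)/log(N/log N)| ≤ C/(log N)² for all N ≥ N_0. -/
open Filter Real
set_option maxHeartbeats 1600000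

noncomputable section

/-- The variance map `M(x) = ((1+x)^b - 1)/b`; its `k`-fold composition is `(Mmap b)^[k]`. -/
def Mmap (b : ℕ) (x : ℝ) : ℝ := ((1 + x) ^ b - 1) / b

/-- `κ_b = (2/(b-1))^{1/2}`. -/
def kappa (b : ℕ) : ℝ := Real.sqrt (2 / ((b : ℝ) - 1))

/-- `η_b = (b+1)/(3(b-1))`. -/
def eta (b : ℕ) : ℝ := ((b : ℝ) + 1) / (3 * ((b : ℝ) - 1))

namespace MyAux

def aa (b : ℕ) : ℝ := ((b : ℝ) - 1) / 2
def dd (b : ℕ) : ℝ := ((b : ℝ) - 1) * ((b : ℝ) - 2) / 6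
def ee (b : ℕ) : ℝ := aa b ^ 2 - dd b
def BB (b : ℕ) : ℝ := ee b * aa b + aa b * dd b + ee b * dd b + (1 + aa b + ee b) * 8 ^ b / b

lemma nonneg_bbb (b : ℕ) : 0 ≤ (b : ℝ) * ((b : ℝ) - 1) * ((b : ℝ) - 2) := by
  rcases b with _ | _ | b
  · norm_num
  · norm_num
  · have h : (0:ℝ) ≤ (b:ℝ) := Nat.cast_nonneg b
    push_cast
    nlinarith [mul_nonneg (mul_nonneg (by linarith : (0:ℝ) ≤ (b:ℝ) + 2) (by linarith : (0:ℝ) ≤ (b:ℝ) + 1)) h]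

lemma pow_cubic_lb (b : ℕ) (x : ℝ) (hx : 0 ≤ x) :
    1 + b * x + ((b : ℝ) * ((b : ℝ) - 1) / 2) * x ^ 2
      + ((b : ℝ) * ((b : ℝ) - 1) * ((b : ℝ) - 2) / 6) * x ^ 3 ≤ (1 + x) ^ b := by
  induction b with
  | zero => norm_num
  | succ b ih =>
      have h1 : (0:ℝ) ≤ 1 + x := by linarith
      have h2 : (1 + (b:ℝ) * x + ((b : ℝ) * ((b : ℝ) - 1) / 2) * x ^ 2
          + ((b : ℝ) * ((b : ℝ) - 1) * ((b : ℝ) - 2) / 6) * x ^ 3) * (1 + x)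
          ≤ (1 + x) ^ b * (1 + x) := by
        apply mul_le_mul_of_nonneg_right ih h1
      calc 1 + (↑(b+1)) * x + ((↑(b+1) : ℝ) * ((↑(b+1) : ℝ) - 1) / 2) * x ^ 2
            + ((↑(b+1) : ℝ) * ((↑(b+1) : ℝ) - 1) * ((↑(b+1) : ℝ) - 2) / 6) * x ^ 3
          ≤ (1 + (b:ℝ) * x + ((b : ℝ) * ((b : ℝ) - 1) / 2) * x ^ 2
            + ((b : ℝ) * ((b : ℝ) - 1) * ((b : ℝ) - 2) / 6) * x ^ 3) * (1 + x) := by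
            push_cast
            nlinarith [mul_nonneg (nonneg_bbb b) (pow_nonneg hx 4)]
        _ ≤ (1 + x) ^ b * (1 + x) := h2
        _ = (1 + x) ^ (b + 1) := by ring

lemma cube_le_pow (b : ℕ) : ((b : ℝ)) ^ 3 ≤ 8 ^ b := by
  have h' : (b : ℝ) ≤ 2 ^ b := by exact_mod_cast (@Nat.lt_two_pow_self b).le
  have h2 : (0:ℝ) ≤ (b:ℝ) := Nat.cast_nonneg b
  calc ((b:ℝ)) ^ 3 ≤ ((2:ℝ) ^ b) ^ 3 := pow_le_pow_left₀ h2 h' 3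
    _ = 8 ^ b := by rw [← pow_mul, mul_comm, pow_mul]; norm_num

lemma C3_le_pow (b : ℕ) : (b : ℝ) * ((b : ℝ) - 1) * ((b : ℝ) - 2) / 6 ≤ 8 ^ b := by
  rcases b with _ | _ | b
  · norm_num
  · norm_num
  · have h : (0:ℝ) ≤ (b:ℝ) := Nat.cast_nonneg b
    have h3 := cube_le_pow (b + 2)
    push_cast at h3 ⊢
    nlinarith [mul_nonneg (by linarith : (0:ℝ) ≤ (b:ℝ) + 2) h,
      mul_nonneg (mul_nonneg (by linarith : (0:ℝ) ≤ (b:ℝ) + 2) (by linarith : (0:ℝ) ≤ (b:ℝ)+1)) h]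

lemma pow_cubic_ub (b : ℕ) (x : ℝ) (hx : 0 ≤ x) (hx2 : x ≤ 1/2) :
    (1 + x) ^ b ≤ 1 + b * x + ((b : ℝ) * ((b : ℝ) - 1) / 2) * x ^ 2
      + ((b : ℝ) * ((b : ℝ) - 1) * ((b : ℝ) - 2) / 6) * x ^ 3 + 8 ^ b * x ^ 4 := by
  induction b with
  | zero => norm_num; nlinarith [pow_nonneg hx 4]
  | succ b ih =>
      have h1 : (0:ℝ) ≤ 1 + x := by linarith
      have hC3 := C3_le_pow b
      have h8 : (0:ℝ) < 8 ^ b := by positivity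
      have h5 : (0:ℝ) ≤ x ^ 4 := by positivity
      have expand : (1 + (b:ℝ) * x + ((b : ℝ) * ((b : ℝ) - 1) / 2) * x ^ 2
            + ((b : ℝ) * ((b : ℝ) - 1) * ((b : ℝ) - 2) / 6) * x ^ 3 + 8 ^ b * x ^ 4) * (1 + x)
          = 1 + (↑(b+1)) * x + ((↑(b+1) : ℝ) * ((↑(b+1) : ℝ) - 1) / 2) * x ^ 2
            + ((↑(b+1) : ℝ) * ((↑(b+1) : ℝ) - 1) * ((↑(b+1) : ℝ) - 2) / 6) * x ^ 3
            + ((b : ℝ) * ((b : ℝ) - 1) * ((b : ℝ) - 2) / 6 + 8 ^ b + 8 ^ b * x) * x ^ 4 := by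
        push_cast; ring
      have hcoef : ((b : ℝ) * ((b : ℝ) - 1) * ((b : ℝ) - 2) / 6 + 8 ^ b + 8 ^ b * x) ≤ 8 ^ (b+1) := by
        have : (8:ℝ) ^ b * x ≤ 8 ^ b * (1/2) := mul_le_mul_of_nonneg_left hx2 h8.le
        have h88 : (8:ℝ) ^ (b+1) = 8 * 8 ^ b := by ring
        linarith
      calc (1 + x) ^ (b + 1) = (1 + x) ^ b * (1 + x) := by ring
        _ ≤ (1 + (b:ℝ) * x + ((b : ℝ) * ((b : ℝ) - 1) / 2) * x ^ 2
            + ((b : ℝ) * ((b : ℝ) - 1) * ((b : ℝ) - 2) / 6) * x ^ 3 + 8 ^ b * x ^ 4) * (1 + x) :=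
            mul_le_mul_of_nonneg_right ih h1
        _ ≤ 1 + (↑(b+1)) * x + ((↑(b+1) : ℝ) * ((↑(b+1) : ℝ) - 1) / 2) * x ^ 2
            + ((↑(b+1) : ℝ) * ((↑(b+1) : ℝ) - 1) * ((↑(b+1) : ℝ) - 2) / 6) * x ^ 3
            + 8 ^ (b+1) * x ^ 4 := by
            rw [expand]
            have := mul_le_mul_of_nonneg_right hcoef h5
            linarith

end MyAux

namespace MyAux

variable {b : ℕ}

lemma aa_pos (hb : 2 ≤ b) : 0 < aa b := by
  have : (2:ℝ) ≤ b := by exact_mod_cast hb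
  unfold aa; linarith

lemma dd_nonneg (hb : 2 ≤ b) : 0 ≤ dd b := by
  have : (2:ℝ) ≤ b := by exact_mod_cast hb
  unfold dd; nlinarith

lemma ee_pos (hb : 2 ≤ b) : 0 < ee b := by
  have h : (2:ℝ) ≤ b := by exact_mod_cast hb
  unfold ee aa dd; nlinarith

lemma BB_pos (hb : 2 ≤ b) : 0 < BB b := by
  have h : (2:ℝ) ≤ b := by exact_mod_cast hb
  have h8 : (0:ℝ) < 8 ^ b := by positivity
  have ha := aa_pos hb; have hd := dd_nonneg hb; have he := ee_pos hb
  unfold BB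
  have hpos : 0 < (1 + aa b + ee b) * 8 ^ b / b := by
    apply div_pos; nlinarith; linarith
  nlinarith [mul_nonneg he.le hd, mul_nonneg ha.le hd, mul_pos he ha]

lemma Mmap_ge_self (hb : 2 ≤ b) {x : ℝ} (hx : 0 ≤ x) : x ≤ Mmap b x := by
  have hb2 : (2:ℝ) ≤ b := by exact_mod_cast hb
  have hbpos : (0:ℝ) < b := by linarith
  have h := pow_cubic_lb b x hx
  have h2 : 0 ≤ ((b : ℝ) * ((b : ℝ) - 1) / 2) * x ^ 2 :=
    mul_nonneg (by nlinarith) (pow_nonneg hx 2)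
  have h3 : 0 ≤ ((b : ℝ) * ((b : ℝ) - 1) * ((b : ℝ) - 2) / 6) * x ^ 3 :=
    mul_nonneg (by nlinarith [nonneg_bbb b]) (pow_nonneg hx 3)
  rw [Mmap, le_div_iff₀ hbpos]
  nlinarith

lemma Mmap_pos (hb : 2 ≤ b) {x : ℝ} (hx : 0 < x) : 0 < Mmap b x :=
  lt_of_lt_of_le hx (Mmap_ge_self hb hx.le)

/-- Cubic approximation of `Mmap`. -/
lemma Mmap_cubic (hb : 2 ≤ b) {x : ℝ} (hx : 0 ≤ x) (hx2 : x ≤ 1/2) :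
    0 ≤ Mmap b x - (x + aa b * x ^ 2 + dd b * x ^ 3)
      ∧ Mmap b x - (x + aa b * x ^ 2 + dd b * x ^ 3) ≤ (8 ^ b / b) * x ^ 4 := by
  have hbpos : (0:ℝ) < b := by exact_mod_cast lt_of_lt_of_le (by norm_num) hb
  have hlb := pow_cubic_lb b x hx
  have hub := pow_cubic_ub b x hx hx2
  have e1 : Mmap b x = ((1+x)^b - 1) / b := rfl
  have hq4 : (8:ℝ)^b/(b:ℝ)*x^4*(b:ℝ) = 8^b*x^4 := by field_simp
  constructor
  · rw [e1, sub_nonneg, le_div_iff₀ hbpos]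
    unfold aa dd
    nlinarith
  · rw [e1, sub_le_iff_le_add, div_le_iff₀ hbpos]
    unfold aa dd
    nlinarith [hq4]

/-- Key estimate: `1/M(x) = 1/x - a + e·x + O(x²)`. -/
lemma inv_Mmap_est (hb : 2 ≤ b) {x : ℝ} (hx : 0 < x) (hx2 : x ≤ 1/2) :
    |1 / Mmap b x - (1 / x - aa b + ee b * x)| ≤ BB b * x ^ 2 := by
  have hbpos : (0:ℝ) < b := by exact_mod_cast lt_of_lt_of_le (by norm_num) hb
  obtain ⟨hθ0, hθ1⟩ := Mmap_cubic hb hx.le hx2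
  set M := Mmap b x with hM
  have hMx : x ≤ M := Mmap_ge_self hb hx.le
  have hMpos : 0 < M := lt_of_lt_of_le hx hMx
  have ha := aa_pos hb; have hd := dd_nonneg hb; have he := ee_pos hb
  set θ := M - (x + aa b * x ^ 2 + dd b * x ^ 3) with hθ
  clear_value θ
  clear_value M
  have hxsq : x ^ 2 ≤ 1 := by nlinarith
  have key : |x - (1 - aa b * x + ee b * x ^ 2) * M| ≤ BB b * x ^ 4 := by
    have expand : x - (1 - aa b * x + ee b * x ^ 2) * M
        = -((ee b * aa b - aa b * dd b) * x ^ 4) - ee b * dd b * x ^ 5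
          - (1 - aa b * x + ee b * x ^ 2) * θ := by
      have hee : ee b = aa b ^ 2 - dd b := rfl
      rw [hθ]; rw [hee]; ring
    have hz : |1 - aa b * x + ee b * x ^ 2| ≤ 1 + aa b + ee b := by
      have g1 : aa b * x ≤ aa b * (1/2) := mul_le_mul_of_nonneg_left hx2 ha.le
      have g2 : ee b * x ^ 2 ≤ ee b * 1 := mul_le_mul_of_nonneg_left hxsq he.le
      have g3 : 0 ≤ aa b * x := mul_nonneg ha.le hx.le
      have g4 : 0 ≤ ee b * x ^ 2 := mul_nonneg he.le (by positivity)
      rw [abs_le]; constructor <;> nlinarith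
    have hθb : |θ| ≤ (8 ^ b / b) * x ^ 4 := by
      rw [abs_le]; constructor <;> linarith
    have h1 : |(1 - aa b * x + ee b * x ^ 2) * θ| ≤ (1 + aa b + ee b) * ((8 ^ b / b) * x ^ 4) := by
      rw [abs_mul]
      apply mul_le_mul hz hθb (abs_nonneg _) (by nlinarith)
    have h2 : |(ee b * aa b - aa b * dd b) * x ^ 4| ≤ (ee b * aa b + aa b * dd b) * x ^ 4 := by
      rw [abs_mul, abs_pow, abs_of_pos hx]
      apply mul_le_mul_of_nonneg_right _ (by positivity)
      rw [abs_le]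
      have := mul_nonneg he.le ha.le
      have := mul_nonneg ha.le hd
      constructor <;> nlinarith
    have h3 : |ee b * dd b * x ^ 5| ≤ ee b * dd b * x ^ 4 := by
      rw [abs_mul, abs_pow, abs_of_pos hx, abs_of_nonneg (mul_nonneg he.le hd)]
      apply mul_le_mul_of_nonneg_left _ (mul_nonneg he.le hd)
      calc x ^ 5 = x ^ 4 * x := by ring
        _ ≤ x ^ 4 * 1 := by nlinarith [pow_nonneg hx.le 4]
        _ = x ^ 4 := by ring
    have e1 := abs_le.mp h1
    have e2 := abs_le.mp h2
    have e3 := abs_le.mp h3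
    have eBB : BB b * x ^ 4 = (ee b * aa b + aa b * dd b) * x ^ 4 + ee b * dd b * x ^ 4
        + (1 + aa b + ee b) * ((8 ^ b / b) * x ^ 4) := by
      unfold BB; field_simp
    rw [expand, abs_le]
    constructor
    · linarith [e1.1, e1.2, e2.1, e2.2, e3.1, e3.2, eBB]
    · linarith [e1.1, e1.2, e2.1, e2.2, e3.1, e3.2, eBB]
  have iden : 1 / M - (1 / x - aa b + ee b * x)
      = (x - (1 - aa b * x + ee b * x ^ 2) * M) / (x * M) := by
    field_simp
  have hxM : (0:ℝ) < x * M := mul_pos hx hMpos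
  rw [iden, abs_div, abs_of_pos hxM, div_le_iff₀ hxM]
  calc |x - (1 - aa b * x + ee b * x ^ 2) * M| ≤ BB b * x ^ 4 := key
    _ = (BB b * x ^ 2) * (x * x) := by ring
    _ ≤ (BB b * x ^ 2) * (x * M) := by
        apply mul_le_mul_of_nonneg_left (mul_le_mul_of_nonneg_left hMx hx.le)
          (mul_nonneg (BB_pos hb).le (by positivity))

end MyAux

namespace MyAux

/-- Step estimate in reciprocal coordinates. -/
lemma step_est {b : ℕ} (hb : 2 ≤ b) {y : ℝ} (hy : 2 ≤ y) :
    0 < Mmap b (1/y) ∧ |1/(Mmap b (1/y)) - (y - aa b + ee b / y)| ≤ BB b / y^2 := by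
  have hy0 : 0 < y := by linarith
  have hx : 0 < 1/y := by positivity
  have hx2 : 1/y ≤ 1/2 := by
    rw [div_le_div_iff₀ hy0 (by norm_num)]; linarith
  refine ⟨Mmap_pos hb hx, ?_⟩
  have h := inv_Mmap_est hb hx hx2
  have e1 : 1/(1/y) = y := one_div_one_div y
  have e2 : ee b * (1/y) = ee b / y := by ring
  have e3 : BB b * (1/y)^2 = BB b / y^2 := by field_simp
  rw [e1, e2, e3] at h
  exact h

lemma helper_sqrt {s : ℝ} (hs : 2 ≤ s) :
    1/(2*(Real.sqrt s)^3) ≤ 1/Real.sqrt (s-1) - 1/Real.sqrt s := by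
  have h1 : (0:ℝ) < s - 1 := by linarith
  have h0 : (0:ℝ) < s := by linarith
  set u := Real.sqrt s with hu
  set v := Real.sqrt (s-1) with hv
  have hu2 : u^2 = s := Real.sq_sqrt h0.le
  have hv2 : v^2 = s - 1 := Real.sq_sqrt h1.le
  have hupos : 0 < u := Real.sqrt_pos.2 h0
  have hvpos : 0 < v := Real.sqrt_pos.2 h1
  have hvu : v ≤ u := Real.sqrt_le_sqrt (by linarith)
  have key : (u+v)*v*u ≤ 2*u^3 := by nlinarith [mul_pos hupos hvpos, mul_pos hupos hupos]
  have huv : (u - v)*(u+v) = 1 := by linear_combination hu2 - hv2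
  have e : 1/v - 1/u = 1/((u+v)*v*u) := by
    rw [div_sub_div _ _ (ne_of_gt hvpos) (ne_of_gt hupos)]
    rw [div_eq_div_iff (by positivity) (by positivity)]
    linear_combination (v*u)*huv
  rw [e]
  apply one_div_le_one_div_of_le (by positivity) key

lemma helper_logsqrt {s : ℝ} (hs : 1 ≤ s) : Real.log s + 1 ≤ 2*Real.sqrt s := by
  have h0 : (0:ℝ) < s := by linarith
  have h1 : Real.log (Real.sqrt s) = Real.log s / 2 := Real.log_sqrt h0.le
  have h2 : Real.log (Real.sqrt s) ≤ Real.sqrt s - 1 :=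
    Real.log_le_sub_one_of_pos (Real.sqrt_pos.2 h0)
  have h3 : (1:ℝ) ≤ Real.sqrt s := by
    rw [show (1:ℝ) = Real.sqrt 1 by simp]; exact Real.sqrt_le_sqrt hs
  linarith [h1 ▸ h2]

lemma helper_logdiff {s : ℝ} (hs : 2 ≤ s) :
    1/s ≤ Real.log s - Real.log (s-1) ∧ Real.log s - Real.log (s-1) ≤ 1/(s-1) := by
  have h1 : (0:ℝ) < s - 1 := by linarith
  have h0 : (0:ℝ) < s := by linarith
  have e : Real.log s - Real.log (s-1) = Real.log (s/(s-1)) :=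
    (Real.log_div (ne_of_gt h0) (ne_of_gt h1)).symm
  constructor
  · have h2 : Real.log ((s-1)/s) ≤ (s-1)/s - 1 := Real.log_le_sub_one_of_pos (by positivity)
    have e2 : Real.log ((s-1)/s) = Real.log (s-1) - Real.log s :=
      Real.log_div (ne_of_gt h1) (ne_of_gt h0)
    have e3 : (s-1)/s - 1 = -(1/s) := by field_simp; ring
    rw [e2, e3] at h2; linarith
  · have h2 : Real.log (s/(s-1)) ≤ s/(s-1) - 1 := Real.log_le_sub_one_of_pos (by positivity)
    have e3 : s/(s-1) - 1 = 1/(s-1) := by field_simp; ring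
    rw [e3] at h2; rw [e]; exact h2

lemma ev_lin_log (c1 c2 c3 : ℝ) (h : 0 < c1) :
    ∀ᶠ u : ℝ in atTop, c2 * Real.log u + c3 ≤ c1 * u := by
  have hlo := (Real.isLittleO_log_id_atTop.const_mul_left c2).def (show 0 < c1/2 by linarith)
  filter_upwards [hlo, eventually_ge_atTop (max 0 (2*c3/c1))] with u h1 h2
  have hu0 : 0 ≤ u := le_trans (le_max_left _ _) h2
  have hu3 : 2*c3/c1 ≤ u := le_trans (le_max_right _ _) h2
  have h1' : |c2 * Real.log u| ≤ c1/2 * u := by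
    rw [abs_mul]
    simpa [Real.norm_eq_abs, abs_of_nonneg hu0] using h1
  have : c3 ≤ c1/2 * u := by
    rw [div_le_iff₀ h] at hu3; linarith
  calc c2 * Real.log u + c3 ≤ |c2 * Real.log u| + c3 := by linarith [le_abs_self (c2 * Real.log u)]
    _ ≤ c1/2*u + c1/2*u := by linarith
    _ = c1 * u := by ring

end MyAux

namespace MyAux

lemma kapeta {b : ℕ} (hb : 2 ≤ b) : kappa b ^ 2 / eta b = aa b / ee b := by
  have hb2 : (2:ℝ) ≤ b := by exact_mod_cast hb
  rw [kappa, Real.sq_sqrt (div_nonneg (by norm_num) (by linarith : (0:ℝ) ≤ (b:ℝ)-1))]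
  rw [eta, ee, aa, dd]
  have hb1ne : ((b:ℝ)-1) ≠ 0 := by intro h; linarith
  have hb2ne : ((b:ℝ)+1) ≠ 0 := by intro h; linarith
  have heq : (((b:ℝ)-1)/2)^2 - ((b:ℝ)-1)*((b:ℝ)-2)/6 = ((b:ℝ)-1)*((b:ℝ)+1)/12 := by ring
  rw [heq, div_div_eq_mul_div, div_div_eq_mul_div,
    div_eq_div_iff hb2ne (mul_ne_zero hb1ne hb2ne)]
  field_simp
  ring

end MyAux

/-- **Lemma (iterates of `M`), part (i).** If `X_N = κ_b²/(λ_c N) + O(1/N²)` then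
`M^{⌊λ_c N⌋}(X_N) = (κ_b²/η_b)/log(N/log N) + O(1/(log N)²)`. -/
theorem Mmap_iterate_lambda_c
    (b : ℕ) (hb : 2 ≤ b) (lamc : ℝ) (hlamc : 0 < lamc)
    (X : ℕ → ℝ) (hXpos : ∀ N, 0 ≤ X N)
    (hX : ∃ C : ℝ, 0 < C ∧ ∃ N₀ : ℕ, ∀ N ≥ N₀,
      |X N - kappa b ^ 2 / (lamc * N)| ≤ C / (N : ℝ) ^ 2) :
    ∃ C : ℝ, 0 < C ∧ ∃ N₀ : ℕ, ∀ N ≥ N₀,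
      |(Mmap b)^[⌊lamc * N⌋₊] (X N)
        - (kappa b ^ 2 / eta b) / Real.log ((N : ℝ) / Real.log N)|
        ≤ C / (Real.log N) ^ 2 := by
  obtain ⟨C, hC, N₀, hX⟩ := hX
  have hb2 : (2:ℝ) ≤ b := by exact_mod_cast hb
  have ha := MyAux.aa_pos hb
  have he := MyAux.ee_pos hb
  have hBB := MyAux.BB_pos hb
  set a := MyAux.aa b with hadef
  set E := MyAux.ee b with hEdef
  set B := MyAux.BB b with hBdef
  set q := E / a^2 with hqdef
  have hq : 0 < q := by positivity
  have hEa : 0 < E/a := by positivity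
  have hlog2 : (0:ℝ) < Real.log 2 := Real.log_pos (by norm_num)
  set c5 := (E/a)*(|Real.log lamc| + Real.log 2) + a + 1 with hc5def
  have hc5 : 0 < c5 := by positivity
  set cA := (4*E/a^2)*(E/a + c5) + 2*E/a + 16*B/a^2 with hcAdef
  have hcA : 0 < cA := by positivity
  set cB := 4*E/a^2 with hcBdef
  have hcB : 0 < cB := by positivity
  set A0 := 2*a^2*lamc^2*C + a + 1 with hA0def
  have hA0 : 0 < A0 := by positivity
  set Ds := A0 + 4*cA + 1 with hDsdef
  have hDs : 0 < Ds := by positivity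
  set c6 := (E/a)*(|Real.log lamc| + |Real.log q| + 2*Real.log 2) with hc6def
  have hc6 : 0 ≤ c6 := by positivity
  set D' := Ds + c6 with hD'def
  have hD' : 0 < D' := by linarith
  refine ⟨8*D'*(a/E)^2 + 1, by positivity, ?_⟩
  -- eventual conditions
  have tendN : Tendsto (fun N : ℕ => (N:ℝ)) atTop atTop := tendsto_natCast_atTop_atTop
  have tendT : Tendsto (fun N : ℕ => Real.log N) atTop atTop :=
    Real.tendsto_log_atTop.comp tendN
  have tendQT : Tendsto (fun N : ℕ => q * Real.log N) atTop atTop :=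
    tendT.const_mul_atTop hq
  have ev1 : ∀ᶠ N : ℕ in atTop, N₀ ≤ N := eventually_ge_atTop N₀
  have ev2 : ∀ᶠ N : ℕ in atTop, (3:ℕ) ≤ N := eventually_ge_atTop 3
  have ev3 : ∀ᶠ N : ℕ in atTop,
      2 + (cB*Ds + 1) + 4*q + (4/a)*(Ds+2) + 1 ≤ q * Real.log N :=
    tendQT.eventually_ge_atTop _
  have ev4 : ∀ᶠ N : ℕ in atTop,
      (E/a)*Real.log (q*Real.log N) + c5 ≤ (a/2)*(q*Real.log N) :=
    tendQT.eventually (MyAux.ev_lin_log (a/2) (E/a) c5 (by positivity))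
  have ev5 : ∀ᶠ N : ℕ in atTop, q*Real.log N + 1 ≤ lamc * N :=
    tendN.eventually (MyAux.ev_lin_log lamc q 1 hlamc)
  have ev6 : ∀ᶠ N : ℕ in atTop, 2*a*lamc*C + 2/lamc ≤ (N:ℝ) :=
    tendN.eventually_ge_atTop _
  have ev7 : ∀ᶠ N : ℕ in atTop, 1*Real.log (Real.log N) + 0 ≤ (1/2)*(Real.log N) :=
    tendT.eventually (MyAux.ev_lin_log (1/2) 1 0 (by norm_num))
  have ev8 : ∀ᶠ N : ℕ in atTop, 2*D' + 2 ≤ (E/(2*a)) * Real.log N :=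
    (tendT.const_mul_atTop (show (0:ℝ) < E/(2*a) by positivity)).eventually_ge_atTop _
  obtain ⟨N₁, hN₁⟩ := eventually_atTop.mp
    (((((ev1.and ev2).and ev3).and ev4).and ev5).and ((ev6.and ev7).and ev8))
  refine ⟨N₁, ?_⟩
  intro N hN
  obtain ⟨⟨⟨⟨⟨h1, h2⟩, h3⟩, h4⟩, h5⟩, ⟨h6, h7⟩, h8⟩ := hN₁ N hN
  clear_value a E B q c5 cA cB A0 Ds c6 D'
  -- basic facts about N, t, k, m
  have hN3 : (3:ℝ) ≤ (N:ℝ) := by exact_mod_cast h2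
  have hNpos : (0:ℝ) < N := by linarith
  set t := Real.log N with htdef
  have ht1 : (1:ℝ) ≤ t := by
    have hl : Real.log 3 ≤ t := Real.log_le_log (by norm_num) hN3
    have h3' : (1:ℝ) ≤ Real.log 3 := by
      rw [Real.le_log_iff_exp_le (by norm_num)]
      have := Real.exp_one_lt_d9
      calc Real.exp 1 ≤ 2.7182818286 := this.le
        _ ≤ 3 := by norm_num
    linarith
  have ht0 : (0:ℝ) < t := by linarith
  set k := ⌊lamc * (N:ℝ)⌋₊ with hkdef
  set m := ⌈q * t⌉₊ with hmdef
  set kk := (k:ℝ) with hkkdef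
  set mm := (m:ℝ) with hmmdef
  have hm1 : q*t ≤ mm := Nat.le_ceil _
  have hm2 : mm ≤ q*t + 1 := le_of_lt (Nat.ceil_lt_add_one (mul_nonneg hq.le ht0.le))
  have hb1 : 0 ≤ cB * Ds := mul_nonneg hcB.le hDs.le
  have hb2' : 0 ≤ (4/a) * (Ds + 2) := mul_nonneg (le_of_lt (show (0:ℝ) < 4/a by positivity)) (by linarith)
  have hq4 : (0:ℝ) ≤ 4*q := by positivity
  have hqt2 : (2:ℝ) ≤ q*t := by linarith only [h3, hb1, hb2', hq4]
  have hm_ge2 : (2:ℝ) ≤ mm := le_trans hqt2 hm1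
  have hk1 : kk ≤ lamc * N := Nat.floor_le (by positivity)
  have hk2 : lamc * N - 1 ≤ kk := by
    have := Nat.lt_floor_add_one (lamc * (N:ℝ))
    push_cast at this ⊢
    linarith
  have hlamcN2 : (2:ℝ) ≤ lamc * N := by
    have hle : 2/lamc ≤ (N:ℝ) := by
      have h0 : 0 ≤ 2*a*lamc*C := by positivity
      linarith
    calc (2:ℝ) = lamc * (2/lamc) := by field_simp
      _ ≤ lamc * N := by apply mul_le_mul_of_nonneg_left hle hlamc.le
  have hkm_ub : kk + mm ≤ 2*(lamc*N) := by linarith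
  have hkm_lb : lamc*N/2 ≤ kk + mm := by
    have hmm0 : (0:ℝ) ≤ mm := by linarith
    linarith
  have hkmpos : (0:ℝ) < kk + mm := by linarith
  clear_value t kk mm
  -- log bounds for kk+mm
  have hlogkm_ub : Real.log (kk+mm) ≤ Real.log lamc + t + Real.log 2 := by
    calc Real.log (kk+mm) ≤ Real.log (2*(lamc*N)) := Real.log_le_log hkmpos hkm_ub
      _ = Real.log 2 + (Real.log lamc + Real.log N) := by
          rw [Real.log_mul (by norm_num) (by positivity), Real.log_mul (ne_of_gt hlamc) (ne_of_gt hNpos)]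
      _ = Real.log lamc + t + Real.log 2 := by rw [htdef]; ring
  have hlogkm_lb : Real.log lamc + t - Real.log 2 ≤ Real.log (kk+mm) := by
    have e : Real.log (lamc*N/2) = Real.log lamc + t - Real.log 2 := by
      rw [Real.log_div (by positivity) (by norm_num), Real.log_mul (ne_of_gt hlamc) (ne_of_gt hNpos), htdef]
    rw [← e]
    exact Real.log_le_log (by positivity) hkm_lb
  have haq : a * q = E/a := by rw [hqdef]; field_simp
  -- |a·m − (E/a)·log(k+m)| ≤ c5
  have hc5km : |a*mm - (E/a)*Real.log (kk+mm)| ≤ c5 := by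
    have l1 : a*(q*t) ≤ a*mm := mul_le_mul_of_nonneg_left hm1 ha.le
    have l2' := mul_le_mul_of_nonneg_left hm2 ha.le
    have l2 : a*mm ≤ a*(q*t) + a := by linarith only [l2']
    have l3 := mul_le_mul_of_nonneg_left hlogkm_ub hEa.le
    have l4 := mul_le_mul_of_nonneg_left hlogkm_lb hEa.le
    have haqt : a*(q*t) = (E/a)*t := by rw [mul_comm q t, ← mul_assoc, ← haq]; ring
    have l5 := mul_le_mul_of_nonneg_left (neg_abs_le (Real.log lamc)) hEa.le
    have l6 := mul_le_mul_of_nonneg_left (le_abs_self (Real.log lamc)) hEa.le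
    rw [abs_le]
    constructor
    · linarith only [l1, l2, l3, l4, l5, l6, haqt, hc5def, ha.le]
    · linarith only [l1, l2, l3, l4, l5, l6, haqt, hc5def, ha.le]
  -- claim 1: deviation of ψ from a·s
  have claim1 : ∀ s : ℝ, mm ≤ s →
      |a*s - (a*(s - mm) + (E/a)*(Real.log (kk+mm) - Real.log s))| ≤ (E/a)*Real.log s + c5 := by
    intro s hs
    have hs1 : (1:ℝ) ≤ s := by linarith
    have hlogs : 0 ≤ Real.log s := Real.log_nonneg hs1
    have e : a*s - (a*(s-mm) + (E/a)*(Real.log (kk+mm) - Real.log s))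
        = (a*mm - (E/a)*Real.log (kk+mm)) + (E/a)*Real.log s := by ring
    rw [e]
    have htr := abs_add_le (a*mm - (E/a)*Real.log (kk+mm)) ((E/a)*Real.log s)
    have habs : |(E/a)*Real.log s| = (E/a)*Real.log s := abs_of_nonneg (mul_nonneg hEa.le hlogs)
    linarith
  -- claim 2: (E/a)·log s + c5 ≤ (a/2)·s for s ≥ m
  have claim2 : ∀ s : ℝ, mm ≤ s → (E/a)*Real.log s + c5 ≤ (a/2)*s := by
    intro s hs
    have hqt4 : 4*q ≤ q*t := by linarith only [h3, hb1, hb2']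
    have hu0 : (0:ℝ) < q*t := mul_pos hq ht0
    have hs' : q*t ≤ s := le_trans hm1 hs
    have hspos : (0:ℝ) < s := by linarith
    have hlog_lin : Real.log s ≤ Real.log (q*t) + (s - q*t)/(q*t) := by
      have hh := Real.log_le_sub_one_of_pos (div_pos hspos hu0)
      rw [Real.log_div (ne_of_gt hspos) (ne_of_gt hu0)] at hh
      have e2 : s/(q*t) - 1 = (s - q*t)/(q*t) := by field_simp
      linarith
    have hmul := mul_le_mul_of_nonneg_left hlog_lin hEa.le
    have hfrac : (E/a)*((s - q*t)/(q*t)) ≤ (a/4)*(s - q*t) := by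
      have hc : (E/a)/(q*t) ≤ a/4 := by
        rw [div_le_iff₀ hu0]
        have e3 : (a/4)*(4*q) = E/a := by rw [hqdef]; field_simp
        have e5 := mul_le_mul_of_nonneg_left hqt4 (le_of_lt (div_pos ha (by norm_num : (0:ℝ) < 4)))
        linarith only [e3, e5]
      have e4 : (E/a)*((s - q*t)/(q*t)) = ((E/a)/(q*t))*(s - q*t) := by ring
      rw [e4]
      apply mul_le_mul_of_nonneg_right hc (by linarith)
    have hfin : (0:ℝ) ≤ (a/4)*(s - q*t) :=
      mul_nonneg (le_of_lt (div_pos ha (by norm_num : (0:ℝ) < 4))) (by linarith)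
    -- h4 : (E/a)*log(q t) + c5 ≤ (a/2)*(q t)
    linarith only [hmul, hfrac, hfin, h4]
  -- bound on the slack function
  have hmm1 : (1:ℝ) < mm := by linarith
  have hcBDs : cB*Ds ≤ mm - 1 := by linarith only [hm1, h3, hq4, hb2']
  have ha4 : (0:ℝ) < a/4 := div_pos ha (by norm_num)
  have hDle : ∀ s : ℝ, mm ≤ s → s ≤ kk + mm →
      A0 + 4*cA*(1/Real.sqrt s - 1/Real.sqrt (kk+mm)) + cB*Ds*(1/(s-1) - 1/(kk+mm-1)) ≤ Ds := by
    intro s hs hs2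
    have hspos : (0:ℝ) < s := by linarith
    have hsq1 : (1:ℝ) ≤ Real.sqrt s := by
      have h := Real.sqrt_le_sqrt (show (1:ℝ) ≤ s by linarith)
      simpa using h
    have hsqkm : (0:ℝ) < Real.sqrt (kk+mm) := Real.sqrt_pos.2 hkmpos
    have t1 : 1/Real.sqrt s - 1/Real.sqrt (kk+mm) ≤ 1 := by
      have e1 : 1/Real.sqrt s ≤ 1 := by
        rw [div_le_one (by linarith : (0:ℝ) < Real.sqrt s)]; linarith
      have e2 : 0 ≤ 1/Real.sqrt (kk+mm) := le_of_lt (one_div_pos.2 hsqkm)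
      linarith
    have t1' := mul_le_mul_of_nonneg_left t1 (show (0:ℝ) ≤ 4*cA by linarith)
    have hs1pos : (0:ℝ) < s - 1 := by linarith
    have hkm1pos : (0:ℝ) < kk + mm - 1 := by linarith
    have t2 : 1/(s-1) - 1/(kk+mm-1) ≤ 1/(mm-1) := by
      have e1 : 1/(s-1) ≤ 1/(mm-1) := one_div_le_one_div_of_le (by linarith) (by linarith)
      have e2 : 0 ≤ 1/(kk+mm-1) := le_of_lt (one_div_pos.2 hkm1pos)
      linarith
    have t2' := mul_le_mul_of_nonneg_left t2 hb1
    have t3 : cB*Ds*(1/(mm-1)) ≤ 1 := by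
      rw [mul_one_div, div_le_one (show (0:ℝ) < mm - 1 by linarith)]
      linarith only [hcBDs]
    linarith only [t1', t2', t3, hDsdef]
  -- ψ lower bound
  have hψlb : ∀ s : ℝ, mm ≤ s →
      (a/2)*s ≤ a*(s - mm) + (E/a)*(Real.log (kk+mm) - Real.log s) := by
    intro s hs
    have h1' := abs_le.mp (claim1 s hs)
    have h2' := claim2 s hs
    linarith [h1'.1, h1'.2]
  have hs_big : ∀ s : ℝ, mm ≤ s → Ds + 2 ≤ (a/4)*s := by
    intro s hs
    have e1 : (4/a)*(Ds+2) ≤ q*t := by linarith only [h3, hb1, hq4]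
    have e2 := mul_le_mul_of_nonneg_left e1 ha4.le
    have e3 : (a/4)*((4/a)*(Ds+2)) = Ds + 2 := by field_simp
    have e4 : (a/4)*(q*t) ≤ (a/4)*s :=
      mul_le_mul_of_nonneg_left (by linarith : q*t ≤ s) ha4.le
    linarith only [e2, e3, e4]
  -- nonneg constants used repeatedly
  have hEa2 : (0:ℝ) ≤ 4*E/a^2 := div_nonneg (by linarith) (sq_nonneg a)
  have h16B : (0:ℝ) ≤ 16*B/a^2 := div_nonneg (by linarith) (sq_nonneg a)
  have h2E : (0:ℝ) ≤ 2*E/a := div_nonneg (by linarith) ha.le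
  -- THE INDUCTION
  have key : ∀ n : ℕ, n ≤ k → 0 < (Mmap b)^[n] (X N) ∧
      |1/((Mmap b)^[n] (X N)) - (a*(kk - n) + (E/a)*(Real.log (kk+mm) - Real.log (kk - n + mm)))|
        ≤ A0 + 4*cA*(1/Real.sqrt (kk - n + mm) - 1/Real.sqrt (kk+mm))
          + cB*Ds*(1/(kk - n + mm - 1) - 1/(kk+mm-1)) := by
    intro n
    induction n with
    | zero =>
        intro _
        simp only [Function.iterate_zero, id_eq, Nat.cast_zero, sub_zero]
        have hXb := hX N h1
        have hkap2 : kappa b ^ 2 = 1/a := by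
          rw [kappa, Real.sq_sqrt (div_nonneg (by norm_num) (by linarith : (0:ℝ) ≤ (b:ℝ)-1)), hadef]
          rw [MyAux.aa, one_div_div]
        rw [hkap2, div_div] at hXb
        set P := a*(lamc*(N:ℝ)) with hPdef
        have hPpos : 0 < P := by rw [hPdef]; exact mul_pos ha (mul_pos hlamc hNpos)
        have hC2 : 2*a*lamc*C ≤ (N:ℝ) := by
          have h0 : (0:ℝ) ≤ 2/lamc := by positivity
          linarith
        have hCP : C/(N:ℝ)^2 ≤ 1/(2*P) := by
          rw [div_le_div_iff₀ (by positivity) (by linarith)]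
          have e : C*(2*P) = (2*a*lamc*C)*(N:ℝ) := by rw [hPdef]; ring
          rw [e]
          have := mul_le_mul_of_nonneg_right hC2 hNpos.le
          calc (2*a*lamc*C)*(N:ℝ) ≤ (N:ℝ)*(N:ℝ) := this
            _ = 1*(N:ℝ)^2 := by ring
        have hXlb : 1/(2*P) ≤ X N := by
          have := abs_le.mp hXb
          have e : 1/P - 1/(2*P) = 1/(2*P) := by field_simp; ring
          linarith [this.1, this.2]
        have hX0 : 0 < X N := lt_of_lt_of_le (one_div_pos.2 (by linarith)) hXlb
        refine ⟨hX0, ?_⟩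
        have hnum : |1 - P*(X N)| ≤ a*lamc*C/(N:ℝ) := by
          have e : 1 - P*(X N) = P*(1/P - X N) := by field_simp
          rw [e, abs_mul, abs_of_pos hPpos]
          have h1'' : |1/P - X N| ≤ C/(N:ℝ)^2 := by rw [abs_sub_comm]; exact hXb
          calc P*|1/P - X N| ≤ P*(C/(N:ℝ)^2) := mul_le_mul_of_nonneg_left h1'' hPpos.le
            _ = a*lamc*C/(N:ℝ) := by rw [hPdef]; field_simp
        have hy0 : |1/(X N) - P| ≤ 2*a^2*lamc^2*C := by
          have hiden : 1/(X N) - P = (1 - P*(X N))/(X N) := by field_simp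
          rw [hiden, abs_div, abs_of_pos hX0, div_le_iff₀ hX0]
          calc |1 - P*(X N)| ≤ a*lamc*C/(N:ℝ) := hnum
            _ = (2*a^2*lamc^2*C)*(1/(2*P)) := by rw [hPdef]; field_simp
            _ ≤ (2*a^2*lamc^2*C)*(X N) := by
                apply mul_le_mul_of_nonneg_left hXlb (by positivity)
        have hy0' := abs_le.mp hy0
        have hfl1 : a*(lamc*(N:ℝ)) - a*kk ≤ a := by
          have := mul_le_mul_of_nonneg_left (show lamc*(N:ℝ) - kk ≤ 1 by linarith) ha.le
          linarith [this]
        have hfl2 : a*kk ≤ a*(lamc*(N:ℝ)) := mul_le_mul_of_nonneg_left hk1 ha.le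
        have hz1 : 1/Real.sqrt (kk+mm) - 1/Real.sqrt (kk+mm) = 0 := by ring
        have hz2 : Real.log (kk+mm) - Real.log (kk+mm) = 0 := by ring
        have hz3 : 1/(kk+mm-1) - 1/(kk+mm-1) = 0 := by ring
        rw [hz1, hz2, hz3, abs_le]
        rw [hPdef] at hy0'
        constructor
        · linarith [hy0'.1, hy0'.2, hfl1, hfl2, hA0def]
        · linarith [hy0'.1, hy0'.2, hfl1, hfl2, hA0def]
    | succ n ih =>
        intro hn1
        obtain ⟨hxpos, hinv⟩ := ih (Nat.le_of_succ_le hn1)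
        set x := (Mmap b)^[n] (X N) with hxdef
        clear_value x
        set s : ℝ := kk - n + mm with hsdef
        clear_value s
        have hnk : (n:ℝ) + 1 ≤ kk := by
          rw [hkkdef]; exact_mod_cast hn1
        have hs_lb : mm + 1 ≤ s := by rw [hsdef]; linarith
        have hs_ub : s ≤ kk + mm := by
          rw [hsdef]
          have : (0:ℝ) ≤ (n:ℝ) := Nat.cast_nonneg n
          linarith
        have hs3 : (3:ℝ) ≤ s := by linarith
        have hspos : (0:ℝ) < s := by linarith
        have hsm1 : (0:ℝ) < s - 1 := by linarith
        have hsm2 : (0:ℝ) < s - 2 := by linarith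
        have hDn := hDle s (by linarith) hs_ub
        have hψ := hψlb s (by linarith)
        have hcl1 := claim1 s (by linarith)
        have eψ : a*(kk - ↑n) + (E/a)*(Real.log (kk+mm) - Real.log s)
            = a*(s - mm) + (E/a)*(Real.log (kk+mm) - Real.log s) := by
          rw [hsdef]; ring
        rw [eψ] at hinv
        set y := 1/x with hydef
        clear_value y
        have hinvDs := le_trans hinv hDn
        have hinv2 := abs_le.mp hinv
        have hinvDs2 := abs_le.mp hinvDs
        have hsbig := hs_big s (by linarith)
        have hyl : (a/4)*s + 2 ≤ y := by linarith [hinvDs2.1, hψ, hsbig]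
        have ha4s : (0:ℝ) < (a/4)*s := mul_pos ha4 hspos
        have hy2 : (2:ℝ) ≤ y := by linarith
        have hypos : (0:ℝ) < y := by linarith
        have hxy : 1/y = x := by rw [hydef, one_div_one_div]
        obtain ⟨hMpos, hest⟩ := MyAux.step_est hb hy2
        rw [hxy] at hMpos hest
        rw [← hadef, ← hEdef, ← hBdef] at hest
        have hit : (Mmap b)^[n+1] (X N) = Mmap b x := by
          rw [hxdef, Function.iterate_succ_apply']
        refine ⟨by rw [hit]; exact hMpos, ?_⟩
        rw [hit]
        set y' := 1/Mmap b x with hy'def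
        clear_value y'
        -- rewrite goal in terms of s
        have e1 : kk - (↑(n+1):ℝ) + mm = s - 1 := by rw [hsdef]; push_cast; ring
        have e2 : kk - (↑(n+1):ℝ) = (s - mm) - 1 := by rw [hsdef]; push_cast; ring
        rw [e1, e2]
        have e3 : s - 1 - 1 = s - 2 := by ring
        rw [e3]
        -- log-diff facts
        have hld := MyAux.helper_logdiff (show (2:ℝ) ≤ s by linarith)
        have hlogs0 : (0:ℝ) ≤ Real.log s := Real.log_nonneg (by linarith)
        have hasy : (0:ℝ) < a*s := mul_pos ha hspos
        -- |a*s - y| bound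
        have hcl1' := abs_le.mp hcl1
        have hasy_diff : |a*s - y| ≤ (E/a)*Real.log s + c5 + Ds := by
          rw [abs_le]
          constructor <;> linarith [hcl1'.1, hcl1'.2, hinvDs2.1, hinvDs2.2]
        -- mid1 : |E/y - E/(a*s)|
        have hnum_nonneg : (0:ℝ) ≤ (E/a)*Real.log s + c5 + Ds :=
          add_nonneg (add_nonneg (mul_nonneg hEa.le hlogs0) hc5.le) hDs.le
        have hmid1 : |E/y - E/(a*s)| ≤ ((4*E/a^2)*((E/a)*Real.log s + c5 + Ds))/s^2 := by
          have eq1 : E/y - E/(a*s) = E*(a*s - y)/((a*s)*y) := by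
            field_simp
          rw [eq1, abs_div, abs_mul, abs_of_pos he, abs_of_pos (mul_pos hasy hypos)]
          calc E*|a*s - y|/((a*s)*y)
              ≤ E*((E/a)*Real.log s + c5 + Ds)/((a*s)*((a/4)*s)) := by
                apply div_le_div₀ (mul_nonneg he.le hnum_nonneg)
                  (mul_le_mul_of_nonneg_left hasy_diff he.le)
                  (mul_pos hasy ha4s)
                  (mul_le_mul_of_nonneg_left (by linarith) hasy.le)
            _ = ((4*E/a^2)*((E/a)*Real.log s + c5 + Ds))/s^2 := by
                field_simp
        -- mid2
        have hmid2 : |(E/a)*(1/s) - (E/a)*(Real.log s - Real.log (s-1))| ≤ (2*E/a)/s^2 := by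
          have h1' : |1/s - (Real.log s - Real.log (s-1))| ≤ 1/((s-1)*s) := by
            have ee1 : 1/(s-1) - 1/s = 1/((s-1)*s) := by field_simp; ring
            rw [abs_le]
            constructor
            · linarith [hld.2]
            · have : (0:ℝ) < 1/((s-1)*s) := one_div_pos.2 (mul_pos hsm1 hspos)
              linarith [hld.1]
          have h2' : 1/((s-1)*s) ≤ 2/s^2 := by
            rw [div_le_div_iff₀ (mul_pos hsm1 hspos) (pow_pos hspos 2)]
            have hprod : 0 ≤ s*(s-2) := mul_nonneg hspos.le (by linarith)
            linarith only [hprod]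
          have := mul_le_mul_of_nonneg_left (le_trans h1' h2') hEa.le
          calc |(E/a)*(1/s) - (E/a)*(Real.log s - Real.log (s-1))|
              = (E/a)*|1/s - (Real.log s - Real.log (s-1))| := by
                rw [← mul_sub, abs_mul, abs_of_pos hEa]
            _ ≤ (E/a)*(2/s^2) := by
                calc (E/a)*|1/s - (Real.log s - Real.log (s-1))|
                    ≤ (E/a)*(1/((s-1)*s)) := mul_le_mul_of_nonneg_left h1' hEa.le
                  _ ≤ (E/a)*(2/s^2) := mul_le_mul_of_nonneg_left h2' hEa.le
            _ = (2*E/a)/s^2 := by ring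
        -- remainder bound
        have hrb : B/y^2 ≤ (16*B/a^2)/s^2 := by
          have hsq' : ((a/4)*s)^2 ≤ y^2 := by
            apply pow_le_pow_left₀ ha4s.le (by linarith) 2
          calc B/y^2 ≤ B/((a/4)*s)^2 :=
                div_le_div_of_nonneg_left hBB.le (pow_pos ha4s 2) hsq'
            _ = (16*B/a^2)/s^2 := by
                field_simp
                ring
        -- numerator comparison
        have hnum_le : (4*E/a^2)*((E/a)*Real.log s + c5 + Ds) + 2*E/a + 16*B/a^2
            ≤ cA*(Real.log s + 1) + cB*Ds := by
          rw [hcAdef, hcBdef]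
          have p1 : (0:ℝ) ≤ (4*E/a^2)*c5*Real.log s :=
            mul_nonneg (mul_nonneg hEa2 hc5.le) hlogs0
          have p2 : (0:ℝ) ≤ (4*E/a^2)*(E/a) := mul_nonneg hEa2 hEa.le
          have p3 : (0:ℝ) ≤ (2*E/a + 16*B/a^2)*Real.log s :=
            mul_nonneg (by linarith) hlogs0
          linarith only [p1, p2, p3]
        have hnum_div := (div_le_div_iff_of_pos_right (pow_pos hspos 2)).mpr hnum_le
        -- increments
        have hsq := MyAux.helper_sqrt (show (2:ℝ) ≤ s by linarith)
        have hls := MyAux.helper_logsqrt (show (1:ℝ) ≤ s by linarith)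
        have hsqpos : 0 < Real.sqrt s := Real.sqrt_pos.2 hspos
        have hss : Real.sqrt s * Real.sqrt s = s := Real.mul_self_sqrt hspos.le
        have heq2 : 2*Real.sqrt s/s^2 = 4*(1/(2*(Real.sqrt s)^3)) := by
          have hcube : (Real.sqrt s)^3 = s * Real.sqrt s := by
            rw [pow_succ, Real.sq_sqrt hspos.le]
          rw [hcube]
          have h4' : 4*(1/(2*(s*Real.sqrt s))) = 2/(s*Real.sqrt s) := by ring
          rw [h4', div_eq_div_iff (ne_of_gt (pow_pos hspos 2)) (ne_of_gt (mul_pos hspos hsqpos))]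
          linear_combination (2*s)*hss
        have hstep1 : (Real.log s + 1)/s^2 ≤ 4*(1/(2*(Real.sqrt s)^3)) := by
          rw [← heq2]
          exact (div_le_div_iff_of_pos_right (pow_pos hspos 2)).mpr hls
        have hincA' : (Real.log s + 1)/s^2 ≤ 4*(1/Real.sqrt (s-1) - 1/Real.sqrt s) := by
          linarith [hsq, hstep1]
        have hincA := mul_le_mul_of_nonneg_left hincA' hcA.le
        have he12 : 1/(s-2) - 1/(s-1) = 1/((s-2)*(s-1)) := by
          rw [div_sub_div _ _ (ne_of_gt hsm2) (ne_of_gt hsm1)]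
          have : 1*(s-1) - (s-2)*1 = 1 := by ring
          rw [this]
        have hprod2 : (s-2)*(s-1) ≤ s^2 := by linarith only [hs3]
        have h1s : 1/s^2 ≤ 1/((s-2)*(s-1)) :=
          one_div_le_one_div_of_le (mul_pos hsm2 hsm1) hprod2
        have hincB : cB*Ds*(1/s^2) ≤ cB*Ds*(1/(s-2) - 1/(s-1)) := by
          rw [he12]
          exact mul_le_mul_of_nonneg_left h1s hb1
        -- triangle identity
        have hiden : y' - (a*((s - mm) - 1) + (E/a)*(Real.log (kk+mm) - Real.log (s-1)))
            = (y' - (y - a + E/y))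
              + (y - (a*(s - mm) + (E/a)*(Real.log (kk+mm) - Real.log s)))
              + ((E/y - E/(a*s)) + ((E/a)*(1/s) - (E/a)*(Real.log s - Real.log (s-1)))) := by
          ring
        have ebr1 : ((4*E/a^2)*((E/a)*Real.log s + c5 + Ds) + 2*E/a + 16*B/a^2)/s^2
            = ((4*E/a^2)*((E/a)*Real.log s + c5 + Ds))/s^2 + (2*E/a)/s^2 + (16*B/a^2)/s^2 := by
          ring
        have ebr2 : (cA*(Real.log s + 1) + cB*Ds)/s^2
            = cA*((Real.log s + 1)/s^2) + cB*Ds*(1/s^2) := by ring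
        have hest2 := abs_le.mp hest
        have hmid1' := abs_le.mp hmid1
        have hmid2' := abs_le.mp hmid2
        rw [abs_le]
        constructor
        · linarith only [hiden, hest2.1, hest2.2, hinv2.1, hinv2.2, hmid1'.1, hmid1'.2,
            hmid2'.1, hmid2'.2, hrb, hnum_div, hincA, hincB, ebr1, ebr2]
        · linarith only [hiden, hest2.1, hest2.2, hinv2.1, hinv2.2, hmid1'.1, hmid1'.2,
            hmid2'.1, hmid2'.2, hrb, hnum_div, hincA, hincB, ebr1, ebr2]
  -- ENDGAME
  obtain ⟨hxk, hyk⟩ := key k le_rfl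
  have ek1 : kk - (k:ℝ) + mm = mm := by rw [hkkdef]; ring
  rw [ek1] at hyk
  have ek2 : kk - (k:ℝ) = 0 := by rw [hkkdef]; ring
  rw [ek2] at hyk
  have hDk := hDle mm le_rfl (by linarith only [hk2, hlamcN2, hm_ge2])
  have hyk' : |1/((Mmap b)^[k] (X N)) - (E/a)*(Real.log (kk+mm) - Real.log mm)| ≤ Ds := by
    have e0 : a*0 + (E/a)*(Real.log (kk+mm) - Real.log mm)
        = (E/a)*(Real.log (kk+mm) - Real.log mm) := by ring
    rw [e0] at hyk
    exact le_trans hyk hDk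
  -- the logarithm of N / log N
  have hLn : Real.log ((N:ℝ)/t) = t - Real.log t := by
    rw [Real.log_div (ne_of_gt hNpos) (ne_of_gt ht0), ← htdef]
  rw [hLn]
  have hlt : Real.log t ≤ t/2 := by linarith only [h7]
  have hLlb : t/2 ≤ t - Real.log t := by linarith only [hlt]
  have hLpos : 0 < t - Real.log t := by linarith only [hLlb, ht0]
  -- Y and its bounds
  have hYlb : 2*D' + 2 ≤ (E/a)*(t - Real.log t) := by
    have h1' := mul_le_mul_of_nonneg_left hLlb hEa.le
    have e : (E/a)*(t/2) = E/(2*a)*t := by ring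
    linarith only [h1', e, h8]
  -- |ψ_k − Y| ≤ c6
  have hmlogub : Real.log mm ≤ Real.log q + Real.log t + Real.log 2 := by
    have h2q : mm ≤ 2*(q*t) := by linarith only [hm2, hqt2]
    calc Real.log mm ≤ Real.log (2*(q*t)) := Real.log_le_log (by linarith) h2q
      _ = Real.log 2 + (Real.log q + Real.log t) := by
          rw [Real.log_mul (by norm_num) (ne_of_gt (mul_pos hq ht0)),
            Real.log_mul (ne_of_gt hq) (ne_of_gt ht0)]
      _ = Real.log q + Real.log t + Real.log 2 := by ring
  have hmloglb : Real.log q + Real.log t ≤ Real.log mm := by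
    calc Real.log q + Real.log t = Real.log (q*t) :=
          (Real.log_mul (ne_of_gt hq) (ne_of_gt ht0)).symm
      _ ≤ Real.log mm := Real.log_le_log (mul_pos hq ht0) hm1
  have hψY : |(E/a)*(Real.log (kk+mm) - Real.log mm) - (E/a)*(t - Real.log t)| ≤ c6 := by
    have e : (E/a)*(Real.log (kk+mm) - Real.log mm) - (E/a)*(t - Real.log t)
        = (E/a)*((Real.log (kk+mm) - t) - (Real.log mm - Real.log t)) := by ring
    rw [e, abs_mul, abs_of_pos hEa, hc6def]
    apply mul_le_mul_of_nonneg_left _ hEa.le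
    rw [abs_le]
    constructor
    · have g1 := neg_abs_le (Real.log lamc)
      have g2 := le_abs_self (Real.log q)
      linarith only [g1, g2, hlogkm_lb, hmlogub, hlog2]
    · have g1 := le_abs_self (Real.log lamc)
      have g2 := neg_abs_le (Real.log q)
      linarith only [g1, g2, hlogkm_ub, hmloglb, hlog2]
  have hyk2 : |1/((Mmap b)^[k] (X N)) - (E/a)*(t - Real.log t)| ≤ D' := by
    have a1 := abs_le.mp hyk'
    have a2 := abs_le.mp hψY
    rw [abs_le]
    constructor
    · linarith only [a1.1, a2.1, hD'def]
    · linarith only [a1.2, a2.2, hD'def]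
  -- final computation
  set xk := (Mmap b)^[k] (X N) with hxkdef
  clear_value xk
  set z := 1/xk with hzdef
  have hyk3 := abs_le.mp hyk2
  have hzY : (E/a)*(t - Real.log t) - D' ≤ z := by linarith only [hyk3.1]
  have hzlb : D' + 2 ≤ z := by linarith only [hzY, hYlb]
  have hzpos : (0:ℝ) < z := by linarith only [hzlb, hD']
  have hz2 : (E/a)*(t - Real.log t)/2 ≤ z := by linarith only [hzY, hYlb]
  -- κ²/η = a/E
  have hkapeta : kappa b ^ 2 / eta b = a/E := by
    rw [hadef, hEdef]
    exact MyAux.kapeta hb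
  rw [hkapeta]
  have exk : xk = 1/z := by rw [hzdef, one_div_one_div]
  rw [exk]
  have hYpos : (0:ℝ) < (E/a)*(t - Real.log t) := by linarith only [hYlb, hD']
  have hae2 : (a/E)/(t - Real.log t) = 1/((E/a)*(t - Real.log t)) := by
    rw [one_div, mul_inv, inv_div]
    ring
  have hiden2 : 1/z - 1/((E/a)*(t - Real.log t))
      = ((E/a)*(t - Real.log t) - z)/(z*((E/a)*(t - Real.log t))) := by
    rw [div_sub_div _ _ (ne_of_gt hzpos) (ne_of_gt hYpos)]
    rw [div_eq_div_iff (mul_pos hzpos hYpos).ne' (mul_pos hzpos hYpos).ne']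
    ring
  rw [hae2, hiden2, abs_div, abs_of_pos (mul_pos hzpos hYpos)]
  have hnum' : |(E/a)*(t - Real.log t) - z| ≤ D' := by
    rw [abs_sub_comm]; exact hyk2
  have hW : (0:ℝ) < (E/a)*(t/2) := mul_pos hEa (by linarith only [ht0])
  have hWY : (E/a)*(t/2) ≤ (E/a)*(t - Real.log t) := mul_le_mul_of_nonneg_left hLlb hEa.le
  have hWhalf : (E/a)*(t/2)/2 ≤ z := by linarith only [hz2, hWY]
  have hdenlb : ((E/a)*(t/2)/2)*((E/a)*(t/2)) ≤ z*((E/a)*(t - Real.log t)) :=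
    mul_le_mul hWhalf hWY hW.le hzpos.le
  calc |(E/a)*(t - Real.log t) - z|/(z*((E/a)*(t - Real.log t)))
      ≤ D'/(((E/a)*(t/2)/2)*((E/a)*(t/2))) :=
        div_le_div₀ hD'.le hnum' (mul_pos (by linarith only [hW]) hW) hdenlb
    _ = 8*D'*(a/E)^2/t^2 := by
        field_simp
        ring
    _ ≤ (8*D'*(a/E)^2 + 1)/t^2 := by
        apply (div_le_div_iff_of_pos_right (pow_pos ht0 2)).mpr
        linarith only []


end
end

section
/- Fix an integer b ≥ 2, λ_c > 0, and ε ∈ (0, η_b), and let (X_N)_{N≥1} be a sequence of nonnegative reals such that |X_N − κ_b²/(λ_c N)| = O(1/N²). Then there exists a constant C > 0 such that for all sufficiently large N, C^{−1}/log N ≤ M^{⌊λ_c N + ε log N⌋}(X_N) ≤ C/log N. -/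
open Filter Real

noncomputable section

/-- auxiliary coefficients -/
def Acoef (b : ℕ) : ℝ := ((b : ℝ) - 1) / 2
def Bcoef (b : ℕ) : ℝ := ((b : ℝ) - 1) * ((b : ℝ) - 2) / 6
def Gcoef (b : ℕ) : ℝ := ((b : ℝ) ^ 2 - 1) / 12

private lemma cast_choose_two (n : ℕ) : ((n.choose 2 : ℕ) : ℝ) = n * ((n : ℝ) - 1) / 2 := by
  induction n with
  | zero => simp
  | succ m ih =>
    rw [Nat.choose_succ_succ]
    push_cast
    rw [ih]
    simp [Nat.choose_one_right]
    ring

private lemma cast_choose_three (n : ℕ) :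
    ((n.choose 3 : ℕ) : ℝ) = n * ((n : ℝ) - 1) * ((n : ℝ) - 2) / 6 := by
  induction n with
  | zero => simp
  | succ m ih =>
    rw [Nat.choose_succ_succ]
    push_cast
    rw [ih, cast_choose_two]
    ring

private lemma binom_expand (b : ℕ) (x : ℝ) (hx0 : 0 ≤ x) (hx1 : x ≤ 1) :
    ∃ r : ℝ, 0 ≤ r ∧ r ≤ 2 ^ b * x ^ 4 ∧
      (1 + x) ^ b = 1 + b * x + ((b : ℝ) * ((b : ℝ) - 1) / 2) * x ^ 2
        + ((b : ℝ) * ((b : ℝ) - 1) * ((b : ℝ) - 2) / 6) * x ^ 3 + r := by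
  have hpow : (1 + x) ^ b = ∑ i ∈ Finset.range (b + 1), x ^ i * (b.choose i : ℝ) := by
    rw [add_comm]
    simpa using add_pow x 1 b
  have hext : (1 + x) ^ b = ∑ i ∈ Finset.range (b + 4), x ^ i * (b.choose i : ℝ) := by
    rw [hpow]
    refine Finset.sum_subset (Finset.range_subset_range.mpr (by omega)) ?_
    intro i _ hni
    have hbi : b < i := by
      simp only [Finset.mem_range] at hni
      omega
    rw [Nat.choose_eq_zero_of_lt hbi]
    simp
  have hsplit : (1 + x) ^ b
      = (∑ i ∈ Finset.range 4, x ^ i * (b.choose i : ℝ))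
        + ∑ i ∈ Finset.Ico 4 (b + 4), x ^ i * (b.choose i : ℝ) := by
    rw [hext, Finset.range_eq_Ico, ← Finset.sum_Ico_consecutive _ (by omega : 0 ≤ 4) (by omega),
      ← Finset.range_eq_Ico]
  refine ⟨∑ i ∈ Finset.Ico 4 (b + 4), x ^ i * (b.choose i : ℝ), ?_, ?_, ?_⟩
  · exact Finset.sum_nonneg fun i _ => mul_nonneg (pow_nonneg hx0 _) (by positivity)
  · calc ∑ i ∈ Finset.Ico 4 (b + 4), x ^ i * (b.choose i : ℝ)
        ≤ ∑ i ∈ Finset.Ico 4 (b + 4), x ^ 4 * (b.choose i : ℝ) := by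
          refine Finset.sum_le_sum fun i hi => ?_
          have h4i : 4 ≤ i := (Finset.mem_Ico.mp hi).1
          exact mul_le_mul_of_nonneg_right (pow_le_pow_of_le_one hx0 hx1 h4i) (by positivity)
      _ = x ^ 4 * ∑ i ∈ Finset.Ico 4 (b + 4), (b.choose i : ℝ) := by
          rw [Finset.mul_sum]
      _ ≤ x ^ 4 * 2 ^ b := by
          refine mul_le_mul_of_nonneg_left ?_ (by positivity)
          have h1 : ∑ i ∈ Finset.Ico 4 (b + 4), (b.choose i : ℝ)
              ≤ ∑ i ∈ Finset.range (b + 4), (b.choose i : ℝ) := by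
            refine Finset.sum_le_sum_of_subset_of_nonneg ?_ (fun i _ _ => by positivity)
            rw [Finset.range_eq_Ico]
            exact Finset.Ico_subset_Ico (by omega) le_rfl
          have h2 : ∑ i ∈ Finset.range (b + 4), (b.choose i : ℝ)
              = ∑ i ∈ Finset.range (b + 1), (b.choose i : ℝ) := by
            symm
            refine Finset.sum_subset (Finset.range_subset_range.mpr (by omega)) ?_
            intro i _ hni
            have hbi : b < i := by
              simp only [Finset.mem_range] at hni; omega
            rw [Nat.choose_eq_zero_of_lt hbi]; simp
          have h3 : ∑ i ∈ Finset.range (b + 1), (b.choose i : ℝ) = 2 ^ b := by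
            rw [← Nat.cast_sum]
            rw [Nat.sum_range_choose]
            push_cast; ring
          calc ∑ i ∈ Finset.Ico 4 (b + 4), (b.choose i : ℝ) ≤ _ := h1
            _ = 2 ^ b := by rw [h2, h3]
      _ = 2 ^ b * x ^ 4 := by ring
  · rw [hsplit]
    have : (∑ i ∈ Finset.range 4, x ^ i * (b.choose i : ℝ))
        = 1 + b * x + ((b : ℝ) * ((b : ℝ) - 1) / 2) * x ^ 2
          + ((b : ℝ) * ((b : ℝ) - 1) * ((b : ℝ) - 2) / 6) * x ^ 3 := by
      rw [Finset.sum_range_succ, Finset.sum_range_succ, Finset.sum_range_succ,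
        Finset.sum_range_one]
      rw [cast_choose_two, cast_choose_three]
      simp [Nat.choose_one_right]
      ring
    rw [this]

private lemma Mmap_expand (b : ℕ) (hb : 2 ≤ b) (x : ℝ) (hx0 : 0 ≤ x) (hx1 : x ≤ 1) :
    ∃ r : ℝ, 0 ≤ r ∧ r ≤ 2 ^ b * x ^ 4 ∧
      Mmap b x = x + Acoef b * x ^ 2 + Bcoef b * x ^ 3 + r := by
  obtain ⟨r, hr0, hr1, hr⟩ := binom_expand b x hx0 hx1
  have hbpos : (0 : ℝ) < b := by
    have : (2:ℝ) ≤ b := by exact_mod_cast hb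
    linarith
  refine ⟨r / b, by positivity, ?_, ?_⟩
  · have hb1 : (1:ℝ) ≤ b := by
      have : (2:ℝ) ≤ b := by exact_mod_cast hb
      linarith
    calc r / (b:ℝ) ≤ r / 1 := div_le_div_of_nonneg_left hr0 one_pos hb1
      _ = r := div_one r
      _ ≤ 2 ^ b * x ^ 4 := hr1
  · unfold Mmap Acoef Bcoef
    rw [hr]
    field_simp
    ring

private lemma two_le_cast {b : ℕ} (hb : 2 ≤ b) : (2:ℝ) ≤ (b:ℝ) := by exact_mod_cast hb

private lemma Acoef_pos {b : ℕ} (hb : 2 ≤ b) : 0 < Acoef b := by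
  have := two_le_cast hb; unfold Acoef; linarith

private lemma Gcoef_pos {b : ℕ} (hb : 2 ≤ b) : 0 < Gcoef b := by
  have := two_le_cast hb; unfold Gcoef; nlinarith

private lemma Bcoef_nonneg {b : ℕ} (hb : 2 ≤ b) : 0 ≤ Bcoef b := by
  have := two_le_cast hb; unfold Bcoef; nlinarith

private lemma Mmap_ge_self (b : ℕ) (hb : 2 ≤ b) {x : ℝ} (hx : 0 ≤ x) : x ≤ Mmap b x := by
  have hbpos : (0:ℝ) < b := by have := two_le_cast hb; linarith
  have h := one_add_mul_le_pow (by linarith : (-2:ℝ) ≤ x) b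
  unfold Mmap
  rw [le_div_iff₀ hbpos]
  linarith

private lemma Mmap_pos (b : ℕ) (hb : 2 ≤ b) {x : ℝ} (hx : 0 < x) : 0 < Mmap b x :=
  lt_of_lt_of_le hx (Mmap_ge_self b hb hx.le)

set_option maxHeartbeats 1000000 in
/-- one-step estimate: `1/M(x) = 1/x - A + G x + O(x²)` on `(0,1]`. -/
private lemma Mmap_inv_est (b : ℕ) (hb : 2 ≤ b) : ∃ K : ℝ, 1 ≤ K ∧ ∀ x : ℝ, 0 < x → x ≤ 1 →
    |(Mmap b x)⁻¹ - (x⁻¹ - Acoef b + Gcoef b * x)| ≤ K * x ^ 2 := by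
  set A := Acoef b with hA
  set B := Bcoef b with hB
  set G := Gcoef b with hG
  have hApos : 0 < A := Acoef_pos hb
  have hGpos : 0 < G := Gcoef_pos hb
  have hBnn : 0 ≤ B := Bcoef_nonneg hb
  have hA2 : A ^ 2 = G + B := by
    rw [hA, hB, hG]; unfold Acoef Bcoef Gcoef; ring
  have h2b : (0:ℝ) < 2 ^ b := by positivity
  refine ⟨|A*B - A*G| + |B*G| + (A + G + 1) * 2 ^ b + 1, by
    nlinarith [abs_nonneg (A*B - A*G), abs_nonneg (B*G)], ?_⟩
  intro x hx0 hx1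
  obtain ⟨r, hr0, hr1, hr⟩ := Mmap_expand b hb x hx0.le hx1
  set M := Mmap b x with hM
  have hxM : x ≤ M := Mmap_ge_self b hb hx0.le
  have hMpos : 0 < M := lt_of_lt_of_le hx0 hxM
  have hkey : M⁻¹ - (x⁻¹ - A + G * x) = (x - M + (A - G*x) * x * M) / (x * M) := by
    field_simp
    ring
  have hnum : x - M + (A - G*x) * x * M
      = (A*B - A*G) * x^4 - B*G*x^5 + (A*x - G*x^2 - 1) * r := by
    rw [hr]
    linear_combination x^3 * hA2
  have hnum_bd : |x - M + (A - G*x) * x * M|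
      ≤ (|A*B - A*G| + |B*G| + (A + G + 1) * 2 ^ b) * x ^ 4 := by
    rw [hnum]
    have h1 : |(A*B - A*G) * x^4| ≤ |A*B - A*G| * x^4 := by
      rw [abs_mul, abs_pow, abs_of_pos hx0]
    have h2 : |B*G*x^5| ≤ |B*G| * x^4 := by
      rw [abs_mul, abs_pow, abs_of_pos hx0]
      have : x^5 ≤ x^4 := pow_le_pow_of_le_one hx0.le hx1 (by omega)
      have h5 : (0:ℝ) ≤ x^5 := by positivity
      nlinarith [abs_nonneg (B*G)]
    have h3 : |(A*x - G*x^2 - 1) * r| ≤ (A + G + 1) * 2^b * x^4 := by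
      rw [abs_mul]
      have ha : |A*x - G*x^2 - 1| ≤ A + G + 1 := by
        rw [abs_le]
        constructor <;> nlinarith [sq_nonneg x, pow_le_one₀ hx0.le hx1 (n := 2)]
      have hrr : |r| ≤ 2^b * x^4 := by rw [abs_of_nonneg hr0]; exact hr1
      calc |A*x - G*x^2 - 1| * |r| ≤ (A + G + 1) * (2^b * x^4) := by
            apply mul_le_mul ha hrr (abs_nonneg r) (by positivity)
        _ = (A + G + 1) * 2^b * x^4 := by ring
    calc |(A*B - A*G) * x^4 - B*G*x^5 + (A*x - G*x^2 - 1) * r|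
        ≤ |(A*B - A*G) * x^4| + |B*G*x^5| + |(A*x - G*x^2 - 1) * r| := by
          have := abs_add_le ((A*B - A*G) * x^4 - B*G*x^5) ((A*x - G*x^2 - 1) * r)
          have := abs_sub ((A*B - A*G) * x^4) (B*G*x^5)
          calc |(A*B - A*G) * x^4 - B*G*x^5 + (A*x - G*x^2 - 1) * r|
              ≤ |(A*B - A*G) * x^4 - B*G*x^5| + |(A*x - G*x^2 - 1) * r| :=
                abs_add_le _ _
            _ ≤ |(A*B - A*G) * x^4| + |B*G*x^5| + |(A*x - G*x^2 - 1) * r| := by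
                have := abs_sub_abs_le_abs_sub ((A*B - A*G) * x^4) (B*G*x^5)
                have h := abs_sub ((A*B - A*G) * x^4) (B*G*x^5)
                linarith [abs_sub ((A*B - A*G) * x^4) (B*G*x^5)]
      _ ≤ (|A*B - A*G| + |B*G| + (A + G + 1) * 2 ^ b) * x ^ 4 := by linarith
  rw [hkey, abs_div]
  rw [div_le_iff₀ (by positivity : 0 < |x * M|)]
  have habs : |x * M| = x * M := abs_of_pos (by positivity)
  rw [habs]
  have hx2M : x^2 * x^2 ≤ x^2 * (x*M) := by
    have : x*x ≤ x*M := mul_le_mul_of_nonneg_left hxM hx0.le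
    nlinarith
  calc |x - M + (A - G*x) * x * M|
      ≤ (|A*B - A*G| + |B*G| + (A + G + 1) * 2 ^ b) * x ^ 4 := hnum_bd
    _ = (|A*B - A*G| + |B*G| + (A + G + 1) * 2 ^ b) * (x^2 * x^2) := by ring
    _ ≤ (|A*B - A*G| + |B*G| + (A + G + 1) * 2 ^ b) * (x^2 * (x*M)) := by
        apply mul_le_mul_of_nonneg_left hx2M (by positivity)
    _ ≤ (|A*B - A*G| + |B*G| + (A + G + 1) * 2 ^ b + 1) * x ^ 2 * (x * M) := by
        nlinarith [sq_nonneg x, mul_pos hx0 hMpos, pow_pos hx0 2]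

private lemma le_of_phi_le (c u s : ℝ) (hc : 0 ≤ c) (hu : 0 < u) (hs : 2 ≤ s)
    (h : (1 + c) * s ≤ u + c * Real.log u) : s ≤ u := by
  rcases le_or_gt u 1 with h1 | h1
  · exfalso
    have hlog : Real.log u ≤ 0 := Real.log_nonpos hu.le h1
    nlinarith [mul_nonneg hc (neg_nonneg.mpr hlog)]
  · have hlog : Real.log u ≤ u := by
      have := Real.log_le_sub_one_of_pos hu
      linarith
    have h2 : (1 + c) * s ≤ (1 + c) * u := by
      have := mul_le_mul_of_nonneg_left hlog hc
      linarith
    have h3 : (0:ℝ) < 1 + c := by linarith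
    exact le_of_mul_le_mul_left h2 h3

set_option maxHeartbeats 1000000 in
private lemma step_core (A G K g1 : ℝ) (hApos : 0 < A) (hGpos : 0 < G) (hK1 : 1 ≤ K)
    (hg1 : 0 < g1) (hg1G : g1 < G) (Mf : ℝ → ℝ)
    (hMp : ∀ x : ℝ, 0 < x → 0 < Mf x)
    (hest : ∀ x : ℝ, 0 < x → x ≤ 1 → |(Mf x)⁻¹ - (x⁻¹ - A + G * x)| ≤ K * x ^ 2) :
    ∃ u₀ : ℝ, 2 ≤ u₀ ∧ ∀ u : ℝ, u₀ ≤ u →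
      0 < Mf u⁻¹ ∧ 2 ≤ (Mf u⁻¹)⁻¹ ∧
      u + (g1 / A) * Real.log u - A
          ≤ (Mf u⁻¹)⁻¹ + (g1 / A) * Real.log (Mf u⁻¹)⁻¹ ∧
      (Mf u⁻¹)⁻¹ + ((G + 1) / A) * Real.log (Mf u⁻¹)⁻¹
          ≤ u + ((G + 1) / A) * Real.log u - A := by
  obtain ⟨c1, hc1⟩ : ∃ c1 : ℝ, c1 = g1 / A := ⟨_, rfl⟩
  obtain ⟨c2, hc2⟩ : ∃ c2 : ℝ, c2 = (G + 1) / A := ⟨_, rfl⟩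
  have hc1pos : 0 < c1 := hc1 ▸ div_pos hg1 hApos
  have hc2pos : 0 < c2 := hc2 ▸ div_pos (by linarith) hApos
  have hc1A : c1 * A = g1 := by rw [hc1]; field_simp
  have hc2A : c2 * A = G + 1 := by rw [hc2]; field_simp
  obtain ⟨S, hS⟩ : ∃ S : ℝ, S = A + G + K := ⟨_, rfl⟩
  have hSpos : 0 < S := by rw [hS]; linarith
  obtain ⟨K2, hK2⟩ : ∃ K2 : ℝ, K2 = K + c1 * (G + K) + 2 * c1 * S ^ 2 := ⟨_, rfl⟩
  obtain ⟨K3, hK3⟩ : ∃ K3 : ℝ, K3 = K + c2 * (G + K) := ⟨_, rfl⟩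
  have hK2pos : 0 < K2 := by
    rw [hK2]
    have h1 : 0 < c1 * (G + K) := mul_pos hc1pos (by linarith)
    have h2 : 0 < c1 * S^2 := mul_pos hc1pos (pow_pos hSpos 2)
    linarith
  have hK3pos : 0 < K3 := by
    rw [hK3]
    have : 0 < c2 * (G + K) := mul_pos hc2pos (by linarith)
    linarith
  rw [← hc1, ← hc2]
  refine ⟨max (max (4*S) (K2 / (G - g1) + 1)) (max (K3 + 1) (2*A + 2*K + 4)), ?_, ?_⟩
  · have h4S : (4:ℝ) ≤ 4*S := by rw [hS]; linarith
    calc (2:ℝ) ≤ 4*S := by linarith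
      _ ≤ _ := le_trans (le_max_left _ _) (le_max_left _ _)
  intro u hu
  have hu4S : 4*S ≤ u := le_trans (le_trans (le_max_left _ _) (le_max_left _ _)) hu
  have huK2 : K2 / (G - g1) + 1 ≤ u :=
    le_trans (le_trans (le_max_right _ _) (le_max_left _ _)) hu
  have huK3 : K3 + 1 ≤ u := le_trans (le_trans (le_max_left _ _) (le_max_right _ _)) hu
  have huAK : 2*A + 2*K + 4 ≤ u := le_trans (le_trans (le_max_right _ _) (le_max_right _ _)) hu
  have hupos : 0 < u := by linarith
  have hu1 : 1 ≤ u := by linarith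
  obtain ⟨v, hv⟩ : ∃ v : ℝ, v = u⁻¹ := ⟨_, rfl⟩
  have hv0 : 0 < v := hv ▸ inv_pos.mpr hupos
  have hv1 : v ≤ 1 := by
    rw [hv, inv_le_one_iff₀]; right; exact hu1
  have huv : u * v = 1 := by rw [hv]; exact mul_inv_cancel₀ hupos.ne'
  have hMpos : 0 < Mf u⁻¹ := hMp u⁻¹ (inv_pos.mpr hupos)
  refine ⟨hMpos, ?_⟩
  obtain ⟨F, hF⟩ : ∃ F : ℝ, F = (Mf u⁻¹)⁻¹ := ⟨_, rfl⟩
  rw [← hF]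
  have hFpos : 0 < F := hF ▸ inv_pos.mpr hMpos
  have hest' : |F - (u - A + G * v)| ≤ K * v ^ 2 := by
    rw [hF, hv]
    have h := hest u⁻¹ (inv_pos.mpr hupos) (by rw [inv_le_one_iff₀]; right; exact hu1)
    rwa [inv_inv] at h
  obtain ⟨e, he_def⟩ : ∃ e : ℝ, e = F - (u - A + G * v) := ⟨_, rfl⟩
  have heK : |e| ≤ K * v ^ 2 := he_def ▸ hest'
  have heK' : -(K*v^2) ≤ e ∧ e ≤ K*v^2 := abs_le.mp heK
  have hKvv : 0 ≤ K*v*(1-v) := mul_nonneg (mul_nonneg (by linarith) hv0.le) (by linarith)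
  have hKv2v : 0 ≤ K*v^2*(1-v) :=
    mul_nonneg (mul_nonneg (by linarith) (sq_nonneg v)) (by linarith)
  have hKv : K * v ^ 2 ≤ K * v := by linarith [hKvv, hKv2v]
  have hGv0 : 0 ≤ G * v := mul_nonneg hGpos.le hv0.le
  have hGv : G * v ≤ G := by
    have : 0 ≤ G*(1-v) := mul_nonneg hGpos.le (by linarith)
    linarith
  have hKv1 : K * v ≤ K := by
    have : 0 ≤ K*(1-v) := mul_nonneg (by linarith) (by linarith)
    linarith
  have hSv : 4 * (S * v) ≤ 1 := by
    have h := mul_le_mul_of_nonneg_right hu4S hv0.le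
    rw [huv] at h
    linarith [h]
  have hFe : F = u - A + G*v + e := by rw [he_def]; ring
  have hFlb : u / 2 ≤ F := by linarith [heK'.1]
  have hF2 : 2 ≤ F := by linarith
  obtain ⟨t, ht_def⟩ : ∃ t : ℝ, t = (F - u) / u := ⟨_, rfl⟩
  have hFut : F = u * (1 + t) := by
    rw [ht_def]; field_simp; ring
  have ht_eq : t = v * (-A + G*v + e) := by
    rw [ht_def, hFe, div_eq_mul_inv, ← hv]; ring
  have htabs : |t| ≤ S * v := by
    rw [ht_eq]
    have h1 : |(-A + G*v + e)| ≤ S := by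
      rw [abs_le, hS]
      constructor <;> linarith [heK'.1, heK'.2]
    calc |v * (-A + G*v + e)| = v * |(-A + G*v + e)| := by
          rw [abs_mul, abs_of_pos hv0]
      _ ≤ v * S := mul_le_mul_of_nonneg_left h1 hv0.le
      _ = S * v := by ring
  have htt := abs_le.mp htabs
  have ht_half : -(1/2) ≤ t ∧ t ≤ 1/2 := ⟨by linarith [htt.1], by linarith [htt.2]⟩
  have h1t : (0:ℝ) < 1 + t := by linarith [ht_half.1]
  have hlogF : Real.log F = Real.log u + Real.log (1 + t) := by
    rw [hFut, Real.log_mul hupos.ne' h1t.ne']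
  have hlog_up : Real.log (1 + t) ≤ t := by
    have := Real.log_le_sub_one_of_pos h1t
    linarith
  have hlog_lo : t - 2*t^2 ≤ Real.log (1 + t) := by
    have hinv : Real.log (1+t) = -Real.log (1+t)⁻¹ := by
      rw [Real.log_inv]; ring
    have h2 := Real.log_le_sub_one_of_pos (inv_pos.mpr h1t)
    have h3 : 1 - (1+t)⁻¹ ≤ Real.log (1+t) := by
      rw [hinv]; linarith
    have h4 : t - 2*t^2 ≤ 1 - (1+t)⁻¹ := by
      have h5 : 1 - (1+t)⁻¹ = t / (1+t) := by field_simp; ring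
      rw [h5, le_div_iff₀ h1t]
      have hp : 0 ≤ t^2*(1+2*t) := mul_nonneg (sq_nonneg t) (by linarith [ht_half.1])
      linarith [hp]
    linarith
  have ht2 : t^2 ≤ S^2 * v^2 := by
    have h := sq_le_sq' htt.1 htt.2
    calc t^2 ≤ (S*v)^2 := h
      _ = S^2*v^2 := by ring
  refine ⟨hF2, ?_, ?_⟩
  · -- lower bound with c1
    rw [hlogF]
    have hvK2 : K2 * v ≤ G - g1 := by
      have h6 : (K2 / (G - g1)) * v ≤ u * v :=
        mul_le_mul_of_nonneg_right (by linarith) hv0.le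
      rw [huv] at h6
      have h7 : (K2 / (G - g1)) * v = K2 * v / (G - g1) := by ring
      rw [h7] at h6
      have := (div_le_one (by linarith : (0:ℝ) < G - g1)).mp h6
      linarith
    have hgoal : 0 ≤ G*v + e + c1*t - 2*c1*t^2 := by
      have hexp : c1 * t = -(g1*v) + c1*v*(G*v) + c1*v*e := by
        rw [ht_eq]; linear_combination (-v) * hc1A
      have hm := mul_le_mul_of_nonneg_left heK'.1 (mul_pos hc1pos hv0).le
      have hcube : 0 ≤ c1*K*v^2*(1-v) :=
        mul_nonneg (mul_nonneg (mul_nonneg hc1pos.le (by linarith)) (sq_nonneg v)) (by linarith)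
      have h8 : -(c1*K*v^2) ≤ c1*v*e := by linarith [hm, hcube]
      have h9 : 2*c1*t^2 ≤ 2*c1*S^2*v^2 := by
        have := mul_le_mul_of_nonneg_left ht2 (by positivity : (0:ℝ) ≤ 2*c1)
        linarith [this]
      have h10 : 0 ≤ (G - g1 - K2*v) * v := mul_nonneg (by linarith) hv0.le
      have hK2v : K2*v^2 = K*v^2 + c1*G*v^2 + c1*K*v^2 + 2*c1*S^2*v^2 := by
        rw [hK2]; ring
      have hcGv : 0 ≤ c1*G*v^2 := by positivity
      linarith [hexp, heK'.1, h8, h9, h10, hK2v, hcGv]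
    have hlg := mul_le_mul_of_nonneg_left hlog_lo hc1pos.le
    calc u + c1 * Real.log u - A
        = (u - A + G*v + e) + c1*Real.log u + c1*(t - 2*t^2) - (G*v + e + c1*t - 2*c1*t^2) := by
          ring
      _ ≤ (u - A + G*v + e) + c1*Real.log u + c1*(t - 2*t^2) := by linarith
      _ ≤ F + c1*Real.log u + c1*Real.log (1+t) := by
          rw [hFe]
          linarith
      _ = F + c1 * (Real.log u + Real.log (1+t)) := by ring
  · -- upper bound with c2
    rw [hlogF]
    have hvK3 : K3 * v ≤ 1 := by
      calc K3 * v ≤ u * v := mul_le_mul_of_nonneg_right (by linarith) hv0.le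
        _ = 1 := huv
    have hgoal : G*v + e + c2*t ≤ 0 := by
      have hexp : c2 * t = -((G+1)*v) + c2*v*(G*v) + c2*v*e := by
        rw [ht_eq]; linear_combination (-v) * hc2A
      have hm := mul_le_mul_of_nonneg_left heK'.2 (mul_pos hc2pos hv0).le
      have hcube : 0 ≤ c2*K*v^2*(1-v) :=
        mul_nonneg (mul_nonneg (mul_nonneg hc2pos.le (by linarith)) (sq_nonneg v)) (by linarith)
      have h8 : c2*v*e ≤ c2*K*v^2 := by linarith [hm, hcube]
      have h9 : K3 * v^2 ≤ v := by
        have := mul_le_mul_of_nonneg_right hvK3 hv0.le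
        linarith [this]
      have hK3v : K3*v^2 = K*v^2 + c2*G*v^2 + c2*K*v^2 := by
        rw [hK3]; ring
      linarith [hexp, heK'.2, h8, h9, hK3v]
    have hlg := mul_le_mul_of_nonneg_left hlog_up hc2pos.le
    calc F + c2 * (Real.log u + Real.log (1+t))
        ≤ F + c2*Real.log u + c2*t := by linarith
      _ = (u - A + G*v + e) + c2*Real.log u + c2*t := by rw [hFe]
      _ = u + c2*Real.log u - A + (G*v + e + c2*t) := by ring
      _ ≤ u + c2*Real.log u - A := by linarith

set_option maxHeartbeats 2000000 in
/-- **Lemma (iterates of `M`), part (iii).** If `X_N = κ_b²/(λ_c N) + O(1/N²)` and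
`0 < ε < η_b`, then `C⁻¹/log N ≤ M^{⌊λ_c N + ε log N⌋}(X_N) ≤ C/log N` for
all sufficiently large `N`. -/
theorem Mmap_iterate_log_window
    (b : ℕ) (hb : 2 ≤ b) (lamc : ℝ) (hlamc : 0 < lamc)
    (ε : ℝ) (hε0 : 0 < ε) (hε1 : ε < eta b)
    (X : ℕ → ℝ) (hXpos : ∀ N, 0 ≤ X N)
    (hX : ∃ C : ℝ, 0 < C ∧ ∃ N₀ : ℕ, ∀ N ≥ N₀,
      |X N - kappa b ^ 2 / (lamc * N)| ≤ C / (N : ℝ) ^ 2) :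
    ∃ C : ℝ, 0 < C ∧ ∃ N₀ : ℕ, ∀ N ≥ N₀,
      C⁻¹ / Real.log N ≤ (Mmap b)^[⌊lamc * N + ε * Real.log N⌋₊] (X N) ∧
        (Mmap b)^[⌊lamc * N + ε * Real.log N⌋₊] (X N) ≤ C / Real.log N := by
  obtain ⟨CX, hCXpos, N0X, hXest⟩ := hX
  have hb2 : (2:ℝ) ≤ (b:ℝ) := two_le_cast hb
  have hb1 : (0:ℝ) < (b:ℝ) - 1 := by linarith
  obtain ⟨A, hA⟩ : ∃ A : ℝ, A = Acoef b := ⟨_, rfl⟩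
  obtain ⟨G, hG⟩ : ∃ G : ℝ, G = Gcoef b := ⟨_, rfl⟩
  have hApos : 0 < A := hA ▸ Acoef_pos hb
  have hGpos : 0 < G := hG ▸ Gcoef_pos hb
  have hA2pos : 0 < A^2 := pow_pos hApos 2
  have hkA : kappa b ^ 2 = 1/A := by
    rw [hA]; unfold kappa Acoef
    rw [Real.sq_sqrt (by positivity)]
    field_simp
  have hetaG : eta b * A^2 = G := by
    rw [hA, hG]; unfold eta Acoef Gcoef
    field_simp
    ring
  have hεG : ε * A^2 < G := by
    have := mul_lt_mul_of_pos_right hε1 hA2pos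
    rw [hetaG] at this
    linarith
  obtain ⟨g1, hg1def⟩ : ∃ g1 : ℝ, g1 = (ε*A^2 + G)/2 := ⟨_, rfl⟩
  have hεA2 : 0 < ε*A^2 := mul_pos hε0 hA2pos
  have hg1pos : 0 < g1 := by rw [hg1def]; linarith
  have hg1G : g1 < G := by rw [hg1def]; linarith
  have hεg1 : ε*A^2 < g1 := by rw [hg1def]; linarith
  obtain ⟨K, hK1, hestK⟩ := Mmap_inv_est b hb
  simp only [← hA, ← hG] at hestK
  obtain ⟨us, hus2, hstep⟩ :=
    step_core A G K g1 hApos hGpos hK1 hg1pos hg1G (Mmap b)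
      (fun x hx => Mmap_pos b hb hx) hestK
  have hc1pos : 0 < g1/A := div_pos hg1pos hApos
  have hc2pos : 0 < (G+1)/A := div_pos (by linarith) hApos
  obtain ⟨d1, hd1⟩ : ∃ d1 : ℝ, d1 = (g1 - ε*A^2)/A := ⟨_, rfl⟩
  have hd1pos : 0 < d1 := hd1 ▸ div_pos (by linarith) hApos
  obtain ⟨C5, hC5⟩ : ∃ C5 : ℝ, C5 = (A*lamc)^2*CX := ⟨_, rfl⟩
  have hC5pos : 0 < C5 := hC5 ▸ mul_pos (pow_pos (mul_pos hApos hlamc) 2) hCXpos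
  obtain ⟨C6, hC6⟩ : ∃ C6 : ℝ, C6 = 2*(A*lamc)^2*CX := ⟨_, rfl⟩
  have hC6pos : 0 < C6 := by
    rw [hC6]
    have := mul_pos (pow_pos (mul_pos hApos hlamc) 2) hCXpos
    linarith
  obtain ⟨C7, hC7⟩ : ∃ C7 : ℝ, C7 = C5 + (g1/A)*|Real.log (A*lamc/2)| := ⟨_, rfl⟩
  have hC7pos : 0 < C7 := by
    rw [hC7]
    have : 0 ≤ (g1/A)*|Real.log (A*lamc/2)| := mul_nonneg hc1pos.le (abs_nonneg _)
    linarith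
  obtain ⟨C9, hC9⟩ : ∃ C9 : ℝ,
      C9 = C6 + A + ((G+1)/A)*|Real.log (A*lamc + C6)| + (G+1)/A := ⟨_, rfl⟩
  have hC9pos : 0 < C9 := by
    rw [hC9]
    have : 0 ≤ ((G+1)/A)*|Real.log (A*lamc + C6)| := mul_nonneg hc2pos.le (abs_nonneg _)
    linarith
  -- the constant
  refine ⟨max C9 (2*(1 + g1/A)/d1), lt_of_lt_of_le hC9pos (le_max_left _ _), ?_⟩
  -- eventual largeness
  have t1 : Filter.Tendsto (fun N : ℕ => (N:ℝ)) Filter.atTop Filter.atTop :=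
    tendsto_natCast_atTop_atTop
  have t2 : Filter.Tendsto (fun N : ℕ => Real.log (N:ℝ)) Filter.atTop Filter.atTop :=
    Real.tendsto_log_atTop.comp t1
  have hev := (Filter.eventually_ge_atTop N0X).and ((t1.eventually_ge_atTop 1).and
    ((t1.eventually_ge_atTop (2*A*lamc*CX)).and
      ((t1.eventually_ge_atTop ((C5+1)/(A*lamc/2))).and
        ((t2.eventually_ge_atTop 1).and
          ((t2.eventually_ge_atTop ((2*C7)/d1)).and
            (t2.eventually_ge_atTop ((2*(1+g1/A)*us)/d1)))))))
  obtain ⟨N₀, hN₀⟩ := Filter.eventually_atTop.mp hev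
  refine ⟨N₀, ?_⟩
  intro N hN
  obtain ⟨hN1, hn1, hn2, hn4, hL1, hL2', hL3'⟩ := hN₀ N hN

  have hn0 : (0:ℝ) < N := by linarith
  have hL0 : 0 < Real.log N := by linarith
  have hL2 : 2*C7 ≤ d1 * Real.log N := by
    rw [div_le_iff₀ hd1pos] at hL2'; linarith
  have hL3 : 2*(1 + g1/A)*us ≤ d1 * Real.log N := by
    rw [div_le_iff₀ hd1pos] at hL3'; linarith
  have hn3 : C5 + 1 ≤ (A*lamc/2)*(N:ℝ) := by
    rw [div_le_iff₀ (by positivity : (0:ℝ) < A*lamc/2)] at hn4; linarith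
  -- bounds on X N
  have hALN : (0:ℝ) < A*lamc*N := by positivity
  have hXb := hXest N hN1
  have hrw : kappa b ^ 2 / (lamc * N) = 1/(A*lamc*N) := by
    rw [hkA]; field_simp
  rw [hrw] at hXb
  have habs := abs_le.mp hXb
  have hXhi : X N ≤ 1/(A*lamc*N) + CX/(N:ℝ)^2 := by linarith [habs.2]
  have hXlo : 1/(A*lamc*N) - CX/(N:ℝ)^2 ≤ X N := by linarith [habs.1]
  have hCXN : CX/(N:ℝ)^2 < 1/(A*lamc*N) := by
    rw [div_lt_div_iff₀ (by positivity) hALN]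
    have hh := mul_le_mul_of_nonneg_right hn2 hn0.le
    have hp := mul_pos (mul_pos (mul_pos hApos hlamc) hCXpos) hn0
    linarith [hh, hp]
  have hXposN : 0 < X N := by linarith
  obtain ⟨u0, hu0⟩ : ∃ u0 : ℝ, u0 = (X N)⁻¹ := ⟨_, rfl⟩
  have hu0pos : 0 < u0 := hu0 ▸ inv_pos.mpr hXposN
  have hALNC5 : 1 ≤ A*lamc*N - C5 := by
    have h1 : 0 ≤ (A*lamc/2)*(N:ℝ) := by positivity
    linarith [hn3]
  have hu0lo : A*lamc*N - C5 ≤ u0 := by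
    have hid : (A*lamc*↑N - C5) * (1/(A*lamc*↑N) + CX/(N:ℝ)^2) = 1 - C5*CX/(N:ℝ)^2
        + (A*lamc*CX/↑N - C5/(A*lamc*↑N)) := by
      field_simp
      ring
    have hzero : A*lamc*CX/↑N - C5/(A*lamc*↑N) = 0 := by
      rw [hC5]; field_simp; ring
    have hprod : (A*lamc*↑N - C5) * X N ≤ 1 := by
      calc (A*lamc*↑N - C5) * X N ≤ (A*lamc*↑N - C5) * (1/(A*lamc*↑N) + CX/(N:ℝ)^2) :=
            mul_le_mul_of_nonneg_left hXhi (by linarith)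
        _ = 1 - C5*CX/(N:ℝ)^2 := by rw [hid, hzero]; ring
        _ ≤ 1 := by
            have : 0 ≤ C5*CX/(N:ℝ)^2 := by positivity
            linarith
    rw [hu0, ← one_div, le_div_iff₀ hXposN]
    exact hprod
  have hu0hi : u0 ≤ A*lamc*N + C6 := by
    have hid2 : (A*lamc*↑N + C6) * (1/(A*lamc*↑N) - CX/(N:ℝ)^2)
        = 1 + C6/(A*lamc*↑N) - A*lamc*CX/↑N - C6*CX/(N:ℝ)^2 := by
      field_simp
      ring
    have h2 : A*lamc*CX/↑N + C6*CX/(N:ℝ)^2 ≤ C6/(A*lamc*↑N) := by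
      have e1 : C6/(A*lamc*↑N) = 2*(A*lamc*CX/↑N) := by
        rw [hC6]; field_simp
      have e2 : C6*CX/(N:ℝ)^2 ≤ A*lamc*CX/↑N := by
        rw [hC6, div_le_div_iff₀ (by positivity) (by positivity)]
        have hh := mul_le_mul_of_nonneg_left hn2
          (by positivity : (0:ℝ) ≤ A*lamc*CX*↑N)
        linarith [hh]
      linarith [e1, e2]
    have hprod2 : 1 ≤ (A*lamc*↑N + C6) * X N := by
      calc (1:ℝ) ≤ (A*lamc*↑N + C6) * (1/(A*lamc*↑N) - CX/(N:ℝ)^2) := by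
            rw [hid2]; linarith
        _ ≤ (A*lamc*↑N + C6) * X N :=
            mul_le_mul_of_nonneg_left hXlo (by positivity)
    rw [hu0, ← one_div, div_le_iff₀ hXposN]
    linarith
  -- floor bounds
  have hW0 : 0 ≤ lamc*(N:ℝ) + ε*Real.log N := by positivity
  have hk_le : (⌊lamc*(N:ℝ) + ε*Real.log N⌋₊ : ℝ) ≤ lamc*N + ε*Real.log N :=
    Nat.floor_le hW0
  have hk_gt : lamc*N + ε*Real.log N - 1 ≤ (⌊lamc*(N:ℝ) + ε*Real.log N⌋₊ : ℝ) := by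
    have := Nat.lt_floor_add_one (lamc*(N:ℝ) + ε*Real.log N)
    push_cast at this ⊢
    linarith
  obtain ⟨k, hk⟩ : ∃ k : ℕ, k = ⌊lamc*(N:ℝ) + ε*Real.log N⌋₊ := ⟨_, rfl⟩
  rw [← hk] at hk_le hk_gt ⊢
  -- log comparisons
  have hloglo : Real.log (A*lamc/2) + Real.log ↑N ≤ Real.log (A*lamc*↑N - C5) := by
    have h1 : (A*lamc/2)*↑N ≤ A*lamc*↑N - C5 := by linarith [hn3]
    have h2 := Real.log_le_log (by positivity) h1
    rwa [Real.log_mul (by positivity) (by positivity)] at h2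
  have hlogu0lo : Real.log (A*lamc*↑N - C5) ≤ Real.log u0 :=
    Real.log_le_log (by linarith) hu0lo
  have hlogu0hi : Real.log u0 ≤ Real.log (A*lamc*↑N + C6) :=
    Real.log_le_log hu0pos hu0hi
  have hloghi : Real.log (A*lamc*↑N + C6) ≤ Real.log (A*lamc + C6) + Real.log ↑N := by
    have h1 : A*lamc*↑N + C6 ≤ (A*lamc + C6)*↑N := by
      have hh := mul_le_mul_of_nonneg_left hn1 hC6pos.le
      linarith [hh]
    have h2 := Real.log_le_log (by positivity) h1
    rwa [Real.log_mul (by positivity) (by positivity)] at h2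
  -- the key bound on B1 - A k
  have hAk : A*(k:ℝ) ≤ A*lamc*↑N + A*ε*Real.log ↑N := by
    have hh := mul_le_mul_of_nonneg_left hk_le hApos.le
    linarith [hh]
  have hd1L : (g1/A)*Real.log ↑N - A*ε*Real.log ↑N = d1*Real.log ↑N := by
    rw [hd1]; field_simp
  have hBk' : d1*Real.log ↑N/2 ≤ u0 + (g1/A)*Real.log u0 - A*(k:ℝ) := by
    have h1 : (g1/A)*(Real.log (A*lamc/2) + Real.log ↑N) ≤ (g1/A)*Real.log u0 :=
      mul_le_mul_of_nonneg_left (le_trans hloglo hlogu0lo) hc1pos.le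
    have h2 : -((g1/A)*|Real.log (A*lamc/2)|) ≤ (g1/A)*Real.log (A*lamc/2) := by
      have := mul_le_mul_of_nonneg_left (neg_abs_le (Real.log (A*lamc/2))) hc1pos.le
      linarith [this]
    have h3 : d1*Real.log ↑N - C7 ≤ u0 + (g1/A)*Real.log u0 - A*(k:ℝ) := by
      rw [hC7]
      linarith [h1, h2, hAk, hu0lo, hd1L]
    linarith [hL2]
  have hBk : (1 + g1/A)*us ≤ u0 + (g1/A)*Real.log u0 - A*(k:ℝ) := by
    linarith [hBk', hL3]
  -- induction
  have key : ∀ n : ℕ, n ≤ k → 0 < (Mmap b)^[n] (X N) ∧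
      u0 + (g1/A)*Real.log u0 - A*(n:ℝ)
        ≤ ((Mmap b)^[n] (X N))⁻¹ + (g1/A)*Real.log (((Mmap b)^[n] (X N))⁻¹) ∧
      ((Mmap b)^[n] (X N))⁻¹ + ((G+1)/A)*Real.log (((Mmap b)^[n] (X N))⁻¹)
        ≤ u0 + ((G+1)/A)*Real.log u0 - A*(n:ℝ) := by
    intro n
    induction n with
    | zero =>
      intro _
      refine ⟨hXposN, ?_, ?_⟩ <;>
        simp only [Function.iterate_zero, id_eq, Nat.cast_zero, mul_zero, ← hu0] <;>
        linarith
    | succ m ih =>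
      intro hm1
      have hm : m ≤ k := by omega
      obtain ⟨hxp, hlo, hhi⟩ := ih hm
      have humpos : 0 < ((Mmap b)^[m] (X N))⁻¹ := inv_pos.mpr hxp
      have hAm : A*(m:ℝ) ≤ A*(k:ℝ) :=
        mul_le_mul_of_nonneg_left (by exact_mod_cast Nat.cast_le.mpr hm) hApos.le
      have hum_ge : us ≤ ((Mmap b)^[m] (X N))⁻¹ :=
        le_of_phi_le (g1/A) _ us hc1pos.le humpos hus2 (by linarith [hBk, hlo, hAm])
      obtain ⟨hMp', hF2', hlo', hhi'⟩ := hstep _ hum_ge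
      rw [inv_inv] at hMp' hF2' hlo' hhi'
      have hit : (Mmap b)^[m+1] (X N) = Mmap b ((Mmap b)^[m] (X N)) :=
        Function.iterate_succ_apply' _ _ _
      refine ⟨by rw [hit]; exact hMp', ?_, ?_⟩
      · rw [hit]
        push_cast
        linarith [hlo, hlo']
      · rw [hit]
        push_cast
        linarith [hhi, hhi']
  obtain ⟨hxk, hlok, hhik⟩ := key k le_rfl
  have hukpos : 0 < ((Mmap b)^[k] (X N))⁻¹ := inv_pos.mpr hxk
  have huk_ge : us ≤ ((Mmap b)^[k] (X N))⁻¹ :=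
    le_of_phi_le (g1/A) _ us hc1pos.le hukpos hus2 (by linarith [hBk, hlok])
  have huk1 : 1 ≤ ((Mmap b)^[k] (X N))⁻¹ := by linarith
  -- lower bound on uk of order log N
  have hlogleuk : Real.log (((Mmap b)^[k] (X N))⁻¹) ≤ ((Mmap b)^[k] (X N))⁻¹ := by
    have := Real.log_le_sub_one_of_pos hukpos
    linarith
  have huklo : d1*Real.log ↑N/2 ≤ (1 + g1/A) * ((Mmap b)^[k] (X N))⁻¹ := by
    have h1 : ((Mmap b)^[k] (X N))⁻¹ + (g1/A)*Real.log (((Mmap b)^[k] (X N))⁻¹)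
        ≤ (1 + g1/A) * ((Mmap b)^[k] (X N))⁻¹ := by
      have hh := mul_le_mul_of_nonneg_left hlogleuk hc1pos.le
      linarith [hh]
    linarith [hBk', hlok]
  -- upper bound on uk
  have hukhi : ((Mmap b)^[k] (X N))⁻¹ ≤ C9 * Real.log ↑N := by
    have hlognn : 0 ≤ Real.log (((Mmap b)^[k] (X N))⁻¹) :=
      Real.log_nonneg huk1
    have h0 : ((Mmap b)^[k] (X N))⁻¹
        ≤ u0 + ((G+1)/A)*Real.log u0 - A*(k:ℝ) := by
      linarith [hhik, mul_nonneg hc2pos.le hlognn]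
    have hAk2 : A*lamc*↑N + A*ε*Real.log ↑N - A ≤ A*(k:ℝ) := by
      have hh := mul_le_mul_of_nonneg_left hk_gt hApos.le
      linarith [hh]
    have h2 : ((G+1)/A)*Real.log u0 ≤ ((G+1)/A)*(Real.log (A*lamc + C6) + Real.log ↑N) :=
      mul_le_mul_of_nonneg_left (le_trans hlogu0hi hloghi) hc2pos.le
    have h5 : ((G+1)/A)*Real.log (A*lamc + C6) ≤ ((G+1)/A)*|Real.log (A*lamc + C6)| :=
      mul_le_mul_of_nonneg_left (le_abs_self _) hc2pos.le
    have h4 : 0 ≤ A*ε*Real.log ↑N := by positivity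
    have h6 : C6 + A + ((G+1)/A)*|Real.log (A*lamc + C6)|
        ≤ (C6 + A + ((G+1)/A)*|Real.log (A*lamc + C6)|) * Real.log ↑N := by
      have hnn : 0 ≤ C6 + A + ((G+1)/A)*|Real.log (A*lamc + C6)| := by
        have : 0 ≤ ((G+1)/A)*|Real.log (A*lamc + C6)| := mul_nonneg hc2pos.le (abs_nonneg _)
        linarith
      have hh := mul_le_mul_of_nonneg_left hL1 hnn
      linarith [hh]
    rw [hC9]
    linarith [h0, hAk2, h2, h5, h6, hu0hi, h4]
  -- conclude
  have hC : C9 ≤ max C9 (2*(1 + g1/A)/d1) := le_max_left _ _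
  have hC' : 2*(1 + g1/A)/d1 ≤ max C9 (2*(1 + g1/A)/d1) := le_max_right _ _
  have hCpos : 0 < max C9 (2*(1 + g1/A)/d1) := lt_of_lt_of_le hC9pos hC
  constructor
  · -- lower: C⁻¹/log N ≤ xk
    have h1 : (C9 * Real.log ↑N)⁻¹ ≤ (Mmap b)^[k] (X N) := by
      rw [← inv_inv ((Mmap b)^[k] (X N))]
      exact inv_anti₀ hukpos hukhi
    have h2 : (max C9 (2*(1 + g1/A)/d1))⁻¹ / Real.log ↑N ≤ (C9 * Real.log ↑N)⁻¹ := by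
      rw [mul_inv, div_eq_mul_inv]
      exact mul_le_mul_of_nonneg_right (inv_anti₀ hC9pos hC)
        (inv_nonneg.mpr hL0.le)
    linarith
  · -- upper
    have hd2pos : 0 < d1*Real.log ↑N/2/(1 + g1/A) := by positivity
    have h3 : d1*Real.log ↑N/2/(1 + g1/A) ≤ ((Mmap b)^[k] (X N))⁻¹ := by
      rw [div_le_iff₀ (by positivity : (0:ℝ) < 1 + g1/A)]
      linarith [huklo]
    have h4 : (Mmap b)^[k] (X N) ≤ (d1*Real.log ↑N/2/(1 + g1/A))⁻¹ := by
      rw [← inv_inv ((Mmap b)^[k] (X N))]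
      exact inv_anti₀ hd2pos h3
    have h5 : (d1*Real.log ↑N/2/(1 + g1/A))⁻¹ = (2*(1 + g1/A)/d1) / Real.log ↑N := by
      field_simp
    rw [h5] at h4
    have h6 : (2*(1 + g1/A)/d1) / Real.log ↑N ≤ max C9 (2*(1 + g1/A)/d1) / Real.log ↑N := by
      gcongr
    linarith [h4, h6]
end
end

section
/- Fix an integer b ≥ 2, β > 0, and integers 0 ≤ j < k ≤ n. Then the random variables R_{j,n}(β) and R_{k,n}(β) − R_{j,n}(β) are uncorrelated, i.e. E[R_{j,n}(β) · (R_{k,n}(β) − R_{j,n}(β))] = 0. -/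
open MeasureTheory ProbabilityTheory Filter Real

noncomputable section

/-- Edge set of the `n`-th diamond graph with branching parameter `b = s`,
identified with `(Fin b × Fin b)^n`. -/
abbrev DiamondEdges (b n : ℕ) : Type := Fin n → Fin b × Fin b

/-- The i.i.d. environment: the product of the disorder law `μ` over the edges of `D_n`. -/
def envMeasure (b n : ℕ) (μ : Measure ℝ) : Measure ((DiamondEdges b n) → ℝ) :=
  Measure.pi fun _ => μ

/-- The normalizing constant `E[e^{βω}]`. -/
def emgf (μ : Measure ℝ) (β : ℝ) : ℝ := ∫ x, Real.exp (β * x) ∂μ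

/-- The normalized partition function `W_n(β)`: `W_0(β) = e^{βω}/E[e^{βω}]` and
`W_{n+1}(β) = (1/b) Σ_{i=1}^b Π_{j=1}^b W_n^{(i,j)}(β)`, where the copies of `D_n`
inside `D_{n+1}` are indexed by `(i,j) ∈ Fin b × Fin b` (branch `i`, segment `j`).
This is exactly `|Γ_n|⁻¹ Σ_{p ∈ Γ_n} Π_{a ◁ p} e^{β ω_a}/E[e^{β ω_a}]`. -/
def W (b : ℕ) (μ : Measure ℝ) : (n : ℕ) → ℝ → ((DiamondEdges b n) → ℝ) → ℝ
  | 0, β, ω => Real.exp (β * ω (fun i => i.elim0)) / emgf μ β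
  | n + 1, β, ω => (1 / (b : ℝ)) * ∑ i : Fin b, ∏ j : Fin b,
      W b μ n β (fun a => ω (Fin.cons (i, j) a))

/-- For `g ∈ E_{n-k}` (identified with an embedded copy of `D_k` inside `D_n`), the
environment restricted to the subgraph associated with `g`: the edge `a` of the copy of
`D_k` corresponds to the edge of `D_n` whose first `n - k` coordinates are given by `g`
and whose remaining coordinates are given by `a`. -/
def subEnv (b : ℕ) {n k : ℕ} (g : DiamondEdges b (n - k)) (ω : (DiamondEdges b n) → ℝ) :
    (DiamondEdges b k) → ℝ :=
  fun a => ω (fun i => if hi : (i : ℕ) < n - k then g ⟨(i : ℕ), hi⟩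
    else a ⟨(i : ℕ) - (n - k), by have := i.isLt; omega⟩)

/-- `R_{k,n}(β) = b^{-(n-k)} Σ_{g ∈ E_{n-k}} R_n(β; g)`, where
`R_n(β; g) = W_n(β; g) - 1` and `W_n(β; g)` is the normalized partition function
of the copy of `D_k` inside `D_n` labelled by `g ∈ E_{n-k}`. -/
def Ravg (b : ℕ) (μ : Measure ℝ) (k n : ℕ) (β : ℝ) (ω : (DiamondEdges b n) → ℝ) : ℝ :=
  (1 / (b : ℝ) ^ (n - k)) * ∑ g : DiamondEdges b (n - k), (W b μ k β (subEnv b g ω) - 1)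


/-! ### Auxiliary development -/

section Helpers
variable {Ω : Type*} [MeasurableSpace Ω] {ρ : Measure Ω} [IsProbabilityMeasure ρ]

lemma pi_prod_integrable {ι : Type*} [Fintype ι] {F : ι → Ω → ℝ}
    (hF : ∀ i, Integrable (F i) ρ) :
    Integrable (fun η : ι → Ω => ∏ i, F i (η i)) (Measure.pi fun _ => ρ) := by
  letI : MeasureSpace Ω := ⟨ρ⟩
  haveI : IsProbabilityMeasure (volume : Measure Ω) := ‹_›
  exact Integrable.fintype_prod (f := F) hF

lemma pi_prod_integral {ι : Type*} [Fintype ι] (F : ι → Ω → ℝ) :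
    ∫ η, ∏ i, F i (η i) ∂(Measure.pi fun _ : ι => ρ) = ∏ i, ∫ x, F i x ∂ρ := by
  letI : MeasureSpace Ω := ⟨ρ⟩
  haveI : IsProbabilityMeasure (volume : Measure Ω) := ‹_›
  exact integral_fintype_prod_eq_prod (μ := fun _ : ι => ρ) F

lemma step_int {γ ι : Type*} [Fintype γ] [Fintype ι] (r : ℝ) (F : γ → ι → Ω → ℝ)
    (h : ∀ t p, Integrable (F t p) ρ) :
    Integrable (fun η : ι → Ω => r * ∑ t, ∏ p, F t p (η p)) (Measure.pi fun _ => ρ) ∧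
    ∫ η, r * ∑ t, ∏ p, F t p (η p) ∂(Measure.pi fun _ : ι => ρ)
      = r * ∑ t, ∏ p, ∫ x, F t p x ∂ρ := by
  have hint : ∀ t : γ, Integrable (fun η : ι → Ω => ∏ p, F t p (η p))
      (Measure.pi fun _ => ρ) := fun t => pi_prod_integrable (h t)
  constructor
  · exact (integrable_finset_sum Finset.univ fun t _ => hint t).const_mul r
  · rw [integral_const_mul, integral_finset_sum _ (fun t _ => hint t)]
    exact congrArg _ (Finset.sum_congr rfl fun t _ => pi_prod_integral _)

lemma prod_point {ι : Type*} [Fintype ι] [DecidableEq ι] (c : ι) (x : ι → ℝ) :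
    ∏ p, (if p = c then x p else 1) = x c := by simp

lemma prod_row {b : ℕ} (i : Fin b) (x : Fin b × Fin b → ℝ) :
    ∏ p : Fin b × Fin b, (if p.1 = i then x p else 1) = ∏ jj : Fin b, x (i, jj) := by
  rw [Fintype.prod_prod_type]
  have h : ∀ a : Fin b, (∏ jj : Fin b, if a = i then x (a, jj) else 1)
      = if a = i then ∏ jj : Fin b, x (a, jj) else 1 := fun a => by split_ifs <;> simp
  simp only [h]
  simp

def uncurryME (ι κ Ω' : Type*) [MeasurableSpace Ω'] : (ι → κ → Ω') ≃ᵐ (ι × κ → Ω') where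
  toEquiv := ⟨fun η p => η p.1 p.2, fun θ i j => θ (i, j), fun _ => rfl, fun _ => rfl⟩
  measurable_toFun := measurable_pi_lambda _ fun p =>
    (measurable_pi_apply p.2).comp (measurable_pi_apply p.1)
  measurable_invFun := measurable_pi_lambda _ fun i =>
    measurable_pi_lambda _ fun j => measurable_pi_apply (i, j)

lemma measurePreserving_uncurryME {ι κ : Type*} [Fintype ι] [Fintype κ] :
    MeasurePreserving (uncurryME ι κ Ω)
      (Measure.pi fun _ : ι => Measure.pi fun _ : κ => ρ) (Measure.pi fun _ : ι × κ => ρ) := by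
  refine ⟨(uncurryME ι κ Ω).measurable, ?_⟩
  refine (Measure.pi_eq fun s hs => ?_).symm
  rw [MeasurableEquiv.map_apply]
  have hpre : (uncurryME ι κ Ω) ⁻¹' (Set.univ.pi s)
      = Set.univ.pi (fun i => Set.univ.pi fun j => s (i, j)) := by
    ext η
    simp only [Set.mem_preimage, Set.mem_univ_pi, uncurryME, MeasurableEquiv.coe_mk,
      Equiv.coe_fn_mk, Prod.forall]
  rw [hpre, Measure.pi_pi]
  simp_rw [Measure.pi_pi]
  rw [Fintype.prod_prod_type]
end Helpers

instance envProb (b n : ℕ) (μ : Measure ℝ) [IsProbabilityMeasure μ] :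
    IsProbabilityMeasure (envMeasure b n μ) := by
  unfold envMeasure; infer_instance

def consE (b m : ℕ) : ((Fin b × Fin b) × DiamondEdges b m) ≃ DiamondEdges b (m + 1) where
  toFun p := Fin.cons p.1 p.2
  invFun q := (q 0, Fin.tail q)
  left_inv p := by simp
  right_inv q := by simp

def gE (b m : ℕ) : ((Fin b × Fin b) → DiamondEdges b m → ℝ) ≃ᵐ (DiamondEdges b (m + 1) → ℝ) :=
  (uncurryME _ _ ℝ).trans (MeasurableEquiv.piCongrLeft (fun _ => ℝ) (consE b m))

section Main
variable {b : ℕ} {μ : Measure ℝ} {β : ℝ}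

lemma measurePreserving_gE {m : ℕ} [IsProbabilityMeasure μ] :
    MeasurePreserving (gE b m)
      (Measure.pi fun _ : Fin b × Fin b => envMeasure b m μ) (envMeasure b (m + 1) μ) := by
  have h1 := measurePreserving_uncurryME (ι := Fin b × Fin b) (κ := DiamondEdges b m)
    (Ω := ℝ) (ρ := μ)
  have h2 := measurePreserving_piCongrLeft (fun _ : DiamondEdges b (m+1) => μ) (consE b m)
  exact h2.comp h1

lemma gE_cons {m : ℕ} (η : (Fin b × Fin b) → DiamondEdges b m → ℝ) (c : Fin b × Fin b)
    (a : DiamondEdges b m) : gE b m η (Fin.cons c a) = η c a := by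
  show (MeasurableEquiv.piCongrLeft (fun _ => ℝ) (consE b m)) ((uncurryME _ _ ℝ) η)
      (Fin.cons c a) = η c a
  rw [MeasurableEquiv.coe_piCongrLeft]
  have h : (Fin.cons c a : DiamondEdges b (m + 1)) = consE b m (c, a) := rfl
  rw [h, Equiv.piCongrLeft_apply_apply]
  rfl

lemma integrable_gE_iff {m : ℕ} [IsProbabilityMeasure μ]
    {F : (DiamondEdges b (m+1) → ℝ) → ℝ} :
    Integrable F (envMeasure b (m+1) μ) ↔
      Integrable (fun η => F (gE b m η))
        (Measure.pi fun _ : Fin b × Fin b => envMeasure b m μ) :=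
  (measurePreserving_gE.integrable_comp_emb (gE b m).measurableEmbedding).symm

lemma integral_gE {m : ℕ} [IsProbabilityMeasure μ] (F : (DiamondEdges b (m+1) → ℝ) → ℝ) :
    ∫ ω, F ω ∂(envMeasure b (m+1) μ)
      = ∫ η, F (gE b m η) ∂(Measure.pi fun _ : Fin b × Fin b => envMeasure b m μ) :=
  (measurePreserving_gE.integral_comp' F).symm

lemma W_succ (m : ℕ) (ω : DiamondEdges b (m+1) → ℝ) :
    W b μ (m+1) β ω = (1 / (b : ℝ)) * ∑ i : Fin b, ∏ j : Fin b,
      W b μ m β (fun a => ω (Fin.cons (i, j) a)) := rfl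

lemma W_gE (m : ℕ) (η : (Fin b × Fin b) → DiamondEdges b m → ℝ) :
    W b μ (m+1) β (gE b m η) = (1 / (b : ℝ)) * ∑ i : Fin b, ∏ j : Fin b,
      W b μ m β (η (i, j)) := by
  rw [W_succ]
  simp only [gE_cons]

lemma Ravg_self (j : ℕ) (ω : DiamondEdges b j → ℝ) :
    Ravg b μ j j β ω = W b μ j β ω - 1 := by
  unfold Ravg
  haveI : IsEmpty (Fin (j - j)) := by rw [Nat.sub_self]; infer_instance
  rw [Fintype.sum_unique]
  have hsub : subEnv b (default : DiamondEdges b (j - j)) ω = ω := by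
    funext a
    unfold subEnv
    congr 1
    funext i
    rw [dif_neg (by omega)]
    exact congrArg a (Fin.ext (by simp [Nat.sub_self]))
  rw [hsub, Nat.sub_self, pow_zero]
  norm_num

lemma subEnv_step {j m : ℕ} (hjm : j ≤ m) (η : (Fin b × Fin b) → DiamondEdges b m → ℝ)
    (c : Fin b × Fin b) (g' : DiamondEdges b (m - j)) (g : DiamondEdges b (m + 1 - j))
    (hg : ∀ i : Fin (m + 1 - j), g i
      = Fin.cons (α := fun _ => Fin b × Fin b) c g' (Fin.cast (by omega) i)) :
    subEnv b g (gE b m η) = subEnv b g' (η c) := by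
  funext a
  unfold subEnv
  rw [← gE_cons η c (fun i : Fin m => if hi : (i : ℕ) < m - j then g' ⟨(i : ℕ), hi⟩
    else a ⟨(i : ℕ) - (m - j), by have := i.isLt; omega⟩)]
  refine congrArg ((gE b m) η) (funext fun i => ?_)
  refine Fin.cases ?_ ?_ i
  · rw [Fin.cons_zero, dif_pos (show ((0 : Fin (m+1)) : ℕ) < m + 1 - j by simp; omega)]
    rw [hg]
    have h0 : (Fin.cast (by omega : m + 1 - j = (m - j) + 1)
        (⟨((0 : Fin (m+1)) : ℕ), by simp; omega⟩ : Fin (m + 1 - j))) = 0 := by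
      apply Fin.ext; simp
    rw [h0, Fin.cons_zero]
  · intro i
    rw [Fin.cons_succ]
    by_cases h : (i : ℕ) < m - j
    · rw [dif_pos (show ((i.succ : Fin (m+1)) : ℕ) < m + 1 - j by simp [Fin.val_succ]; omega),
        dif_pos h, hg]
      have hs : (Fin.cast (by omega : m + 1 - j = (m - j) + 1)
          (⟨((i.succ : Fin (m+1)) : ℕ), by simp [Fin.val_succ]; omega⟩ : Fin (m + 1 - j)))
          = Fin.succ ⟨(i : ℕ), h⟩ := by
        apply Fin.ext; simp [Fin.val_succ]
      rw [hs, Fin.cons_succ]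
    · rw [dif_neg (show ¬ ((i.succ : Fin (m+1)) : ℕ) < m + 1 - j by simp [Fin.val_succ]; omega),
        dif_neg h]
      exact congrArg a (Fin.ext (by simp [Fin.val_succ]; omega))

def eeE (b j m : ℕ) (hd : m + 1 - j = (m - j) + 1) :
    ((Fin b × Fin b) × DiamondEdges b (m - j)) ≃ DiamondEdges b (m + 1 - j) :=
  (consE b (m - j)).trans (Equiv.arrowCongr (finCongr hd.symm) (Equiv.refl (Fin b × Fin b)))

lemma eeE_apply (b j m : ℕ) (hd : m + 1 - j = (m - j) + 1) (c : Fin b × Fin b)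
    (g' : DiamondEdges b (m - j)) (i : Fin (m + 1 - j)) :
    eeE b j m hd (c, g') i = Fin.cons (α := fun _ => Fin b × Fin b) c g' (Fin.cast hd i) := by
  simp [eeE, consE, Equiv.arrowCongr, finCongr]

lemma Ravg_gE {j m : ℕ} (hjm : j ≤ m) (η : (Fin b × Fin b) → DiamondEdges b m → ℝ) :
    Ravg b μ j (m+1) β (gE b m η) = (1 / (b : ℝ)) * ∑ c : Fin b × Fin b,
      Ravg b μ j m β (η c) := by
  have hd : m + 1 - j = (m - j) + 1 := by omega
  unfold Ravg
  rw [← Equiv.sum_comp (eeE b j m hd) (fun g => W b μ j β (subEnv b g (gE b m η)) - 1)]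
  rw [Fintype.sum_prod_type]
  have key : ∀ (c : Fin b × Fin b) (g' : DiamondEdges b (m - j)),
      subEnv b (eeE b j m hd (c, g')) (gE b m η) = subEnv b g' (η c) := fun c g' =>
    subEnv_step hjm η c g' _ (eeE_apply b j m hd c g')
  simp only [key]
  rw [Finset.mul_sum]
  rw [hd, pow_succ, Finset.mul_sum]
  refine Finset.sum_congr rfl fun c _ => ?_
  rw [Finset.mul_sum, Finset.mul_sum, Finset.mul_sum]
  refine Finset.sum_congr rfl fun g' _ => by ring

/-- The variance-type constant `V_j = E[(W_j - 1)^2]`. -/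
def Vj (b : ℕ) (μ : Measure ℝ) (β : ℝ) (j : ℕ) : ℝ :=
  ∫ ω, (W b μ j β ω - 1) * (W b μ j β ω - 1) ∂(envMeasure b j μ)

variable [IsProbabilityMeasure μ]

lemma W_props (hb : 0 < b) (hexp : ∀ β' : ℝ, Integrable (fun x => Real.exp (β' * x)) μ)
    (m : ℕ) :
    Integrable (W b μ m β) (envMeasure b m μ) ∧
    Integrable (fun ω => W b μ m β ω * W b μ m β ω) (envMeasure b m μ) ∧
    ∫ ω, W b μ m β ω ∂(envMeasure b m μ) = 1 := by
  induction m with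
  | zero =>
    haveI : NeZero μ := inferInstance
    have hZ : 0 < emgf μ β := integral_exp_pos (hexp β)
    have hdef : (default : DiamondEdges b 0) = (fun i => i.elim0) := by
      funext i; exact i.elim0
    have hrep : ∀ ω : DiamondEdges b 0 → ℝ, W b μ 0 β ω
        = ∏ e : DiamondEdges b 0, (Real.exp (β * ω e) / emgf μ β) := by
      intro ω
      rw [Fintype.prod_unique, hdef]
      rfl
    have hfun : W b μ 0 β = fun ω => ∏ e : DiamondEdges b 0,
        (Real.exp (β * ω e) / emgf μ β) := funext hrep
    have hint1 : Integrable (fun x : ℝ => Real.exp (β * x) / emgf μ β) μ :=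
      (hexp β).div_const _
    have hint2 : Integrable (fun x : ℝ => (Real.exp (β * x) / emgf μ β)
        * (Real.exp (β * x) / emgf μ β)) μ := by
      have h : (fun x : ℝ => (Real.exp (β * x) / emgf μ β) * (Real.exp (β * x) / emgf μ β))
          = fun x => Real.exp ((β + β) * x) / (emgf μ β * emgf μ β) := by
        funext x
        rw [div_mul_div_comm, ← Real.exp_add]
        ring_nf
      rw [h]
      exact (hexp _).div_const _
    refine ⟨?_, ?_, ?_⟩
    · rw [hfun]
      exact pi_prod_integrable fun _ => hint1
    · have h : (fun ω : DiamondEdges b 0 → ℝ => W b μ 0 β ω * W b μ 0 β ω)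
          = fun ω => ∏ e : DiamondEdges b 0, ((Real.exp (β * ω e) / emgf μ β)
            * (Real.exp (β * ω e) / emgf μ β)) := by
        funext ω
        rw [hrep, ← Finset.prod_mul_distrib]
      rw [h]
      exact pi_prod_integrable fun _ => hint2
    · simp only [hrep]
      have key : (∫ ω, ∏ e : DiamondEdges b 0, Real.exp (β * ω e) / emgf μ β
          ∂(envMeasure b 0 μ))
          = ∏ _e : DiamondEdges b 0, ∫ x, Real.exp (β * x) / emgf μ β ∂μ :=
        pi_prod_integral (fun (_ : DiamondEdges b 0) (x : ℝ) => Real.exp (β * x) / emgf μ β)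
      rw [key]
      have h : (∫ x, Real.exp (β * x) / emgf μ β ∂μ) = 1 := by
        rw [integral_div]
        exact div_self hZ.ne'
      simp only [h]
      simp
  | succ m ih =>
    obtain ⟨ihW, ihWW, ihI⟩ := ih
    have hbne : (b : ℝ) ≠ 0 := Nat.cast_ne_zero.mpr hb.ne'
    have hcompW : ∀ η, W b μ (m+1) β (gE b m η) = (1/(b:ℝ)) * ∑ i : Fin b,
        ∏ p : Fin b × Fin b, (if p.1 = i then W b μ m β (η p) else 1) := by
      intro η
      rw [W_gE]
      congr 1
      exact Finset.sum_congr rfl fun i _ => (prod_row i (fun p => W b μ m β (η p))).symm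
    have hFint : ∀ (i : Fin b) (p : Fin b × Fin b),
        Integrable (fun ω => if p.1 = i then W b μ m β ω else 1) (envMeasure b m μ) := by
      intro i p
      split_ifs
      exacts [ihW, integrable_const 1]
    have hstep := step_int (ρ := envMeasure b m μ) (1/(b:ℝ))
      (fun (i : Fin b) (p : Fin b × Fin b) ω => if p.1 = i then W b μ m β ω else 1) hFint
    have hFint2 : ∀ (t : Fin b × Fin b) (p : Fin b × Fin b),
        Integrable (fun ω => (if p.1 = t.1 then W b μ m β ω else 1)
          * (if p.1 = t.2 then W b μ m β ω else 1)) (envMeasure b m μ) := by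
      intro t p
      split_ifs
      · exact ihWW
      · simpa using ihW
      · simpa using ihW
      · simpa using integrable_const (1:ℝ)
    have hstep2 := step_int (ρ := envMeasure b m μ) (1/((b:ℝ)*b))
      (fun (t : Fin b × Fin b) (p : Fin b × Fin b) ω =>
        (if p.1 = t.1 then W b μ m β ω else 1) * (if p.1 = t.2 then W b μ m β ω else 1)) hFint2
    have hcompWW : ∀ η, W b μ (m+1) β (gE b m η) * W b μ (m+1) β (gE b m η)
        = (1/((b:ℝ)*b)) * ∑ t : Fin b × Fin b, ∏ p : Fin b × Fin b,
          ((if p.1 = t.1 then W b μ m β (η p) else 1)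
            * (if p.1 = t.2 then W b μ m β (η p) else 1)) := by
      intro η
      rw [hcompW η]
      rw [Fintype.sum_prod_type (f := fun t : Fin b × Fin b => ∏ p : Fin b × Fin b,
        ((if p.1 = t.1 then W b μ m β (η p) else 1) * (if p.1 = t.2 then W b μ m β (η p) else 1)))]
      simp only [Finset.prod_mul_distrib]
      simp only [Finset.mul_sum, Finset.sum_mul]
      refine Finset.sum_congr rfl fun i _ => Finset.sum_congr rfl fun i' _ => by ring
    refine ⟨?_, ?_, ?_⟩
    · rw [integrable_gE_iff]
      have h : (fun η => W b μ (m+1) β (gE b m η)) = fun η => (1/(b:ℝ)) * ∑ i : Fin b,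
          ∏ p : Fin b × Fin b, (if p.1 = i then W b μ m β (η p) else 1) := funext hcompW
      rw [h]
      exact hstep.1
    · rw [integrable_gE_iff]
      have h : (fun η => W b μ (m+1) β (gE b m η) * W b μ (m+1) β (gE b m η))
          = fun η => (1/((b:ℝ)*b)) * ∑ t : Fin b × Fin b, ∏ p : Fin b × Fin b,
            ((if p.1 = t.1 then W b μ m β (η p) else 1)
              * (if p.1 = t.2 then W b μ m β (η p) else 1)) := funext hcompWW
      rw [h]
      exact hstep2.1
    · rw [integral_gE]
      simp only [hcompW]
      refine (hstep.2).trans ?_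
      have hval : ∀ (i : Fin b) (p : Fin b × Fin b),
          ∫ ω, (if p.1 = i then W b μ m β ω else 1) ∂(envMeasure b m μ) = 1 := by
        intro i p
        split_ifs
        · exact ihI
        · simp
      simp only [hval]
      simp [hbne]

lemma Ravg_int (hb : 0 < b) (hexp : ∀ β' : ℝ, Integrable (fun x => Real.exp (β' * x)) μ)
    (j m : ℕ) (hjm : j ≤ m) :
    Integrable (Ravg b μ j m β) (envMeasure b m μ) ∧
    ∫ ω, Ravg b μ j m β ω ∂(envMeasure b m μ) = 0 := by
  induction m, hjm using Nat.le_induction with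
  | base =>
    obtain ⟨hW, hWW, hI⟩ := W_props hb hexp j
    have hfun : Ravg b μ j j β = fun ω => W b μ j β ω - 1 := funext (Ravg_self j)
    rw [hfun]
    refine ⟨hW.sub (integrable_const 1), ?_⟩
    rw [integral_sub hW (integrable_const 1), hI]
    simp
  | succ m hjm ih =>
    have hbne : (b : ℝ) ≠ 0 := Nat.cast_ne_zero.mpr hb.ne'
    have hcomp : ∀ η, Ravg b μ j (m+1) β (gE b m η) = (1/(b:ℝ)) * ∑ c : Fin b × Fin b,
        ∏ p : Fin b × Fin b, (if p = c then Ravg b μ j m β (η p) else 1) := by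
      intro η
      rw [Ravg_gE hjm η]
      refine congrArg _ (Finset.sum_congr rfl fun c _ => ?_)
      exact (prod_point c (fun p => Ravg b μ j m β (η p))).symm
    have hFint : ∀ (c p : Fin b × Fin b),
        Integrable (fun ω => if p = c then Ravg b μ j m β ω else 1) (envMeasure b m μ) := by
      intro c p
      split_ifs
      exacts [ih.1, integrable_const 1]
    have hstep := step_int (ρ := envMeasure b m μ) (1/(b:ℝ))
      (fun (c p : Fin b × Fin b) ω => if p = c then Ravg b μ j m β ω else 1) hFint
    constructor
    · rw [integrable_gE_iff]
      have h : (fun η => Ravg b μ j (m+1) β (gE b m η)) = fun η => (1/(b:ℝ)) *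
          ∑ c : Fin b × Fin b, ∏ p : Fin b × Fin b,
            (if p = c then Ravg b μ j m β (η p) else 1) := funext hcomp
      rw [h]
      exact hstep.1
    · rw [integral_gE]
      simp only [hcomp]
      refine (hstep.2).trans ?_
      have hval : ∀ (c p : Fin b × Fin b),
          ∫ ω, (if p = c then Ravg b μ j m β ω else 1) ∂(envMeasure b m μ)
            = if p = c then 0 else 1 := by
        intro c p
        split_ifs
        exacts [ih.2, by simp]
      simp only [hval]
      have hprod : ∀ c : Fin b × Fin b, (∏ p : Fin b × Fin b,
          if p = c then (0:ℝ) else 1) = 0 := fun c =>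
        Finset.prod_eq_zero (Finset.mem_univ c) (by simp)
      simp only [hprod]
      simp

lemma RavgW_int (hb : 0 < b) (hexp : ∀ β' : ℝ, Integrable (fun x => Real.exp (β' * x)) μ)
    (j m : ℕ) (hjm : j ≤ m) :
    Integrable (fun ω => Ravg b μ j m β ω * W b μ m β ω) (envMeasure b m μ) ∧
    ∫ ω, Ravg b μ j m β ω * W b μ m β ω ∂(envMeasure b m μ) = Vj b μ β j := by
  induction m, hjm using Nat.le_induction with
  | base =>
    obtain ⟨hW, hWW, hI⟩ := W_props hb hexp j
    have hWm1sq : Integrable (fun ω => (W b μ j β ω - 1) * (W b μ j β ω - 1))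
        (envMeasure b j μ) := by
      have h : (fun ω : DiamondEdges b j → ℝ => (W b μ j β ω - 1) * (W b μ j β ω - 1))
          = fun ω => W b μ j β ω * W b μ j β ω - W b μ j β ω - W b μ j β ω + 1 := by
        funext ω; ring
      rw [h]
      exact ((hWW.sub hW).sub hW).add (integrable_const 1)
    have hWm1 : Integrable (fun ω => W b μ j β ω - 1) (envMeasure b j μ) :=
      hW.sub (integrable_const 1)
    have hrep : (fun ω => Ravg b μ j j β ω * W b μ j β ω)
        = fun ω => (W b μ j β ω - 1) * (W b μ j β ω - 1) + (W b μ j β ω - 1) := by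
      funext ω; rw [Ravg_self]; ring
    rw [hrep]
    refine ⟨hWm1sq.add hWm1, ?_⟩
    rw [integral_add hWm1sq hWm1, integral_sub hW (integrable_const 1), hI]
    simp [Vj]
  | succ m hjm ih =>
    have hbne : (b : ℝ) ≠ 0 := Nat.cast_ne_zero.mpr hb.ne'
    obtain ⟨hW, hWW, hI⟩ := W_props hb hexp m
    have hR := Ravg_int (β := β) hb hexp j m hjm
    have hcomp : ∀ η, Ravg b μ j (m+1) β (gE b m η) * W b μ (m+1) β (gE b m η)
        = (1/((b:ℝ)*b)) * ∑ t : (Fin b × Fin b) × Fin b, ∏ p : Fin b × Fin b,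
          ((if p = t.1 then Ravg b μ j m β (η p) else 1)
            * (if p.1 = t.2 then W b μ m β (η p) else 1)) := by
      intro η
      rw [Ravg_gE hjm η, W_gE m η]
      rw [Fintype.sum_prod_type (f := fun t : (Fin b × Fin b) × Fin b =>
        ∏ p : Fin b × Fin b, ((if p = t.1 then Ravg b μ j m β (η p) else 1)
          * (if p.1 = t.2 then W b μ m β (η p) else 1)))]
      simp only [Finset.prod_mul_distrib, prod_point, prod_row]
      simp only [Finset.mul_sum, Finset.sum_mul]
      rw [Finset.sum_comm]
      refine Finset.sum_congr rfl fun c _ => Finset.sum_congr rfl fun i _ => by ring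
    have hFint : ∀ (t : (Fin b × Fin b) × Fin b) (p : Fin b × Fin b),
        Integrable (fun ω => (if p = t.1 then Ravg b μ j m β ω else 1)
          * (if p.1 = t.2 then W b μ m β ω else 1)) (envMeasure b m μ) := by
      intro t p
      split_ifs
      · exact ih.1
      · simpa using hR.1
      · simpa using hW
      · simpa using integrable_const (1:ℝ)
    have hstep := step_int (ρ := envMeasure b m μ) (1/((b:ℝ)*b))
      (fun (t : (Fin b × Fin b) × Fin b) (p : Fin b × Fin b) ω =>
        (if p = t.1 then Ravg b μ j m β ω else 1)
          * (if p.1 = t.2 then W b μ m β ω else 1)) hFint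
    constructor
    · rw [integrable_gE_iff]
      have h : (fun η => Ravg b μ j (m+1) β (gE b m η) * W b μ (m+1) β (gE b m η))
          = fun η => (1/((b:ℝ)*b)) * ∑ t : (Fin b × Fin b) × Fin b, ∏ p : Fin b × Fin b,
            ((if p = t.1 then Ravg b μ j m β (η p) else 1)
              * (if p.1 = t.2 then W b μ m β (η p) else 1)) := funext hcomp
      rw [h]
      exact hstep.1
    · rw [integral_gE]
      simp only [hcomp]
      refine (hstep.2).trans ?_
      have hval : ∀ (t : (Fin b × Fin b) × Fin b) (p : Fin b × Fin b),
          ∫ ω, ((if p = t.1 then Ravg b μ j m β ω else 1)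
            * (if p.1 = t.2 then W b μ m β ω else 1)) ∂(envMeasure b m μ)
          = if p = t.1 then (if p.1 = t.2 then Vj b μ β j else 0) else 1 := by
        intro t p
        split_ifs
        · exact ih.2
        · simpa using hR.2
        · simpa using hI
        · simp
      simp only [hval]
      have hprod : ∀ t : (Fin b × Fin b) × Fin b, (∏ p : Fin b × Fin b,
          if p = t.1 then (if p.1 = t.2 then Vj b μ β j else 0) else 1)
          = if t.1.1 = t.2 then Vj b μ β j else 0 := fun t =>
        prod_point t.1 (fun p => if p.1 = t.2 then Vj b μ β j else 0)
      simp only [hprod]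
      rw [Fintype.sum_prod_type (f := fun t : (Fin b × Fin b) × Fin b =>
        if t.1.1 = t.2 then Vj b μ β j else 0)]
      simp only [Finset.sum_ite_eq, Finset.mem_univ, if_true]
      rw [Finset.sum_const, Finset.card_univ]
      simp only [Fintype.card_prod, Fintype.card_fin, nsmul_eq_mul, Nat.cast_mul]
      field_simp

lemma RavgRavg_int (hb : 0 < b) (hexp : ∀ β' : ℝ, Integrable (fun x => Real.exp (β' * x)) μ)
    (j k m : ℕ) (hjk : j ≤ k) (hkm : k ≤ m) :
    Integrable (fun ω => Ravg b μ j m β ω * Ravg b μ k m β ω) (envMeasure b m μ) ∧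
    ∫ ω, Ravg b μ j m β ω * Ravg b μ k m β ω ∂(envMeasure b m μ) = Vj b μ β j := by
  induction m, hkm using Nat.le_induction with
  | base =>
    have h5 := RavgW_int (β := β) hb hexp j k hjk
    have h4 := Ravg_int (β := β) hb hexp j k hjk
    have hrep : (fun ω => Ravg b μ j k β ω * Ravg b μ k k β ω)
        = fun ω => Ravg b μ j k β ω * W b μ k β ω - Ravg b μ j k β ω := by
      funext ω; rw [Ravg_self]; ring
    rw [hrep]
    refine ⟨h5.1.sub h4.1, ?_⟩
    rw [integral_sub h5.1 h4.1, h5.2, h4.2, sub_zero]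
  | succ m hkm ih =>
    have hjm : j ≤ m := le_trans hjk hkm
    have hbne : (b : ℝ) ≠ 0 := Nat.cast_ne_zero.mpr hb.ne'
    have hRj := Ravg_int (β := β) hb hexp j m hjm
    have hRk := Ravg_int (β := β) hb hexp k m hkm
    have hcomp : ∀ η, Ravg b μ j (m+1) β (gE b m η) * Ravg b μ k (m+1) β (gE b m η)
        = (1/((b:ℝ)*b)) * ∑ t : (Fin b × Fin b) × (Fin b × Fin b), ∏ p : Fin b × Fin b,
          ((if p = t.1 then Ravg b μ j m β (η p) else 1)
            * (if p = t.2 then Ravg b μ k m β (η p) else 1)) := by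
      intro η
      rw [Ravg_gE hjm η, Ravg_gE hkm η]
      rw [Fintype.sum_prod_type (f := fun t : (Fin b × Fin b) × (Fin b × Fin b) =>
        ∏ p : Fin b × Fin b, ((if p = t.1 then Ravg b μ j m β (η p) else 1)
          * (if p = t.2 then Ravg b μ k m β (η p) else 1)))]
      simp only [Finset.prod_mul_distrib, prod_point]
      simp only [Finset.mul_sum, Finset.sum_mul]
      rw [Finset.sum_comm]
      refine Finset.sum_congr rfl fun c _ => Finset.sum_congr rfl fun c' _ => by ring
    have hFint : ∀ (t : (Fin b × Fin b) × (Fin b × Fin b)) (p : Fin b × Fin b),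
        Integrable (fun ω => (if p = t.1 then Ravg b μ j m β ω else 1)
          * (if p = t.2 then Ravg b μ k m β ω else 1)) (envMeasure b m μ) := by
      intro t p
      split_ifs
      · exact ih.1
      · simpa using hRj.1
      · simpa using hRk.1
      · simpa using integrable_const (1:ℝ)
    have hstep := step_int (ρ := envMeasure b m μ) (1/((b:ℝ)*b))
      (fun (t : (Fin b × Fin b) × (Fin b × Fin b)) (p : Fin b × Fin b) ω =>
        (if p = t.1 then Ravg b μ j m β ω else 1)
          * (if p = t.2 then Ravg b μ k m β ω else 1)) hFint
    constructor
    · rw [integrable_gE_iff]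
      have h : (fun η => Ravg b μ j (m+1) β (gE b m η) * Ravg b μ k (m+1) β (gE b m η))
          = fun η => (1/((b:ℝ)*b)) * ∑ t : (Fin b × Fin b) × (Fin b × Fin b),
            ∏ p : Fin b × Fin b, ((if p = t.1 then Ravg b μ j m β (η p) else 1)
              * (if p = t.2 then Ravg b μ k m β (η p) else 1)) := funext hcomp
      rw [h]
      exact hstep.1
    · rw [integral_gE]
      simp only [hcomp]
      refine (hstep.2).trans ?_
      have hval : ∀ (t : (Fin b × Fin b) × (Fin b × Fin b)) (p : Fin b × Fin b),
          ∫ ω, ((if p = t.1 then Ravg b μ j m β ω else 1)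
            * (if p = t.2 then Ravg b μ k m β ω else 1)) ∂(envMeasure b m μ)
          = if p = t.1 then (if p = t.2 then Vj b μ β j else 0)
            else (if p = t.2 then 0 else 1) := by
        intro t p
        split_ifs
        · exact ih.2
        · simpa using hRj.2
        · simpa using hRk.2
        · simp
      simp only [hval]
      have hprod : ∀ t : (Fin b × Fin b) × (Fin b × Fin b), (∏ p : Fin b × Fin b,
          if p = t.1 then (if p = t.2 then Vj b μ β j else 0)
            else (if p = t.2 then 0 else 1))
          = if t.1 = t.2 then Vj b μ β j else 0 := by
        intro t
        by_cases h : t.1 = t.2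
        · rw [if_pos h]
          have hv : ∀ p : Fin b × Fin b, (if p = t.1 then (if p = t.2 then Vj b μ β j else 0)
              else (if p = t.2 then 0 else 1)) = if p = t.1 then Vj b μ β j else 1 := by
            intro p
            by_cases hp : p = t.1
            · simp [hp, h]
            · have hp2 : p ≠ t.2 := by rw [← h]; exact hp
              simp [hp, hp2]
          simp only [hv]
          exact prod_point t.1 (fun _ => Vj b μ β j)
        · rw [if_neg h]
          exact Finset.prod_eq_zero (Finset.mem_univ t.1) (by simp [h])
      simp only [hprod]
      rw [Fintype.sum_prod_type (f := fun t : (Fin b × Fin b) × (Fin b × Fin b) =>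
        if t.1 = t.2 then Vj b μ β j else 0)]
      simp only [Finset.sum_ite_eq, Finset.mem_univ, if_true]
      rw [Finset.sum_const, Finset.card_univ]
      simp only [Fintype.card_prod, Fintype.card_fin, nsmul_eq_mul, Nat.cast_mul]
      field_simp

end Main

/-- **Lemma (orthogonality of increments).** For `0 ≤ j < k ≤ n`, the random variables
`R_{j,n}(β)` and `R_{k,n}(β) - R_{j,n}(β)` are uncorrelated. -/
theorem Ravg_increments_uncorrelated
    (b : ℕ) (hb : 2 ≤ b) (μ : Measure ℝ) [IsProbabilityMeasure μ]
    (hmean : ∫ x, x ∂μ = 0) (hvar : ∫ x, x ^ 2 ∂μ = 1)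
    (hexp : ∀ β : ℝ, Integrable (fun x => Real.exp (β * x)) μ)
    (β : ℝ) (hβ : 0 < β) (j k n : ℕ) (hjk : j < k) (hkn : k ≤ n) :
    ∫ ω, Ravg b μ j n β ω * (Ravg b μ k n β ω - Ravg b μ j n β ω)
      ∂(envMeasure b n μ) = 0 := by
  have hb0 : 0 < b := by omega
  have h6 := RavgRavg_int (β := β) hb0 hexp j k n hjk.le hkn
  have h6' := RavgRavg_int (β := β) hb0 hexp j j n le_rfl (le_trans hjk.le hkn)
  simp only [mul_sub]
  rw [integral_sub h6.1 h6'.1, h6.2, h6'.2, sub_self]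
end
end
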